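/- arXiv:2009.02714 — 6 statements merged into one kernel-verified Lean document; each statement's English description precedes it below -/
import Mathlib

section
/- Let x be a solution of the delayed consensus inequality on [t₀,∞). Then the function Λ(t) = max_{i∈[1:n]} sup_{s∈[t−h̄,t]} x_i(s) is non-increasing on [t₀,∞). -/
open MeasureTheory Set Filter intervalIntegral

noncomputable section

/-- Standing assumptions on the weight functions: measurable,
`0 ≤ a i j t ≤ ā` on `[0,∞)` and `a i i ≡ 0`. -/
def GoodWeights (n : ℕ) (abar : ℝ) (a : Fin n → Fin n → ℝ → ℝ) : Prop :=
  (∀ i j, Measurable (a i j)) ∧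
  (∀ i j, ∀ t : ℝ, 0 ≤ t → 0 ≤ a i j t ∧ a i j t ≤ abar) ∧
  (∀ i, ∀ t : ℝ, 0 ≤ t → a i i t = 0)

/-- Standing assumptions on the delay functions: measurable,
`0 ≤ h i j t ≤ h̄` on `[0,∞)` and `h i i ≡ 0`. -/
def GoodDelays (n : ℕ) (hbar : ℝ) (h : Fin n → Fin n → ℝ → ℝ) : Prop :=
  (∀ i j, Measurable (h i j)) ∧
  (∀ i j, ∀ t : ℝ, 0 ≤ t → 0 ≤ h i j t ∧ h i j t ≤ hbar) ∧
  (∀ i, ∀ t : ℝ, 0 ≤ t → h i i t = 0)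

/-- `x` is bounded on every compact subset of `[t₀ - h̄, ∞)`. -/
def LocBounded (n : ℕ) (t0 hbar : ℝ) (x : ℝ → Fin n → ℝ) : Prop :=
  ∀ T : ℝ, ∃ C : ℝ, ∀ i : Fin n, ∀ s ∈ Icc (t0 - hbar) T, |x s i| ≤ C

/-- `x` is a solution of the delayed consensus differential *inequality* on `[t₀,∞)`:
it is locally bounded on `[t₀ - h̄, ∞)`, absolutely continuous on `[t₀,∞)` with a.e.
derivative `D` (encoded via the integral representation with locally integrable `D`),
and `D` satisfies the consensus inequality almost everywhere on `[t₀,∞)`. -/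
def IsSolIneq (n : ℕ) (a h : Fin n → Fin n → ℝ → ℝ) (hbar t0 : ℝ)
    (x D : ℝ → Fin n → ℝ) : Prop :=
  LocBounded n t0 hbar x ∧
  (∀ i : Fin n, ∀ T : ℝ, IntegrableOn (fun s => D s i) (Icc t0 T)) ∧
  (∀ i : Fin n, ∀ t : ℝ, t0 ≤ t → x t i = x t0 i + ∫ s in t0..t, D s i) ∧
  (∀ᵐ t : ℝ ∂volume, t0 ≤ t → ∀ i : Fin n,
    D t i ≤ ∑ j : Fin n, a i j t * (x (t - h i j t) j - x t i))

/-- `x` is a solution of the delayed consensus *equation* on `[t₀,∞)`. -/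
def IsSolEq (n : ℕ) (a h : Fin n → Fin n → ℝ → ℝ) (hbar t0 : ℝ)
    (x D : ℝ → Fin n → ℝ) : Prop :=
  LocBounded n t0 hbar x ∧
  (∀ i : Fin n, ∀ T : ℝ, IntegrableOn (fun s => D s i) (Icc t0 T)) ∧
  (∀ i : Fin n, ∀ t : ℝ, t0 ≤ t → x t i = x t0 i + ∫ s in t0..t, D s i) ∧
  (∀ᵐ t : ℝ ∂volume, t0 ≤ t → ∀ i : Fin n,
    D t i = ∑ j : Fin n, a i j t * (x (t - h i j t) j - x t i))

/-- `Λ(t) = max_i sup_{s ∈ [t-h̄, t]} x_i(s)`. -/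
def Lam (n : ℕ) (hbar : ℝ) (x : ℝ → Fin n → ℝ) (t : ℝ) : ℝ :=
  ⨆ i : Fin n, sSup ((fun s => x s i) '' Icc (t - hbar) t)

/-- `λ(t) = min_i inf_{s ∈ [t-h̄, t]} x_i(s)`. -/
def lam (n : ℕ) (hbar : ℝ) (x : ℝ → Fin n → ℝ) (t : ℝ) : ℝ :=
  ⨅ i : Fin n, sInf ((fun s => x s i) '' Icc (t - hbar) t)

/-- Non-instantaneous type-symmetry of the weight matrix with sequence `tp` and
constant `K` (Definition 1). -/
def NonInstTypeSymm (n : ℕ) (a : Fin n → Fin n → ℝ → ℝ) (tp : ℕ → ℝ) (K : ℝ) : Prop :=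
  tp 0 = 0 ∧ StrictMono tp ∧ Tendsto tp atTop atTop ∧ 1 ≤ K ∧
  ∀ p : ℕ, ∀ i j : Fin n,
    K⁻¹ * ∫ t in tp p..tp (p + 1), a j i t ≤ (∫ t in tp p..tp (p + 1), a i j t) ∧
    (∫ t in tp p..tp (p + 1), a i j t) ≤ K * ∫ t in tp p..tp (p + 1), a j i t

/-- The persistent graph `G_∞`, whose arcs are the pairs `(j,i)` with
`∫_0^∞ a_{ij} = ∞` (i.e. `a i j` is not integrable on `[0,∞)`), is connected:
the symmetric reflexive-transitive closure of the arc relation relates any two nodes. -/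
def PersGraphConnected (n : ℕ) (a : Fin n → Fin n → ℝ → ℝ) : Prop :=
  ∀ u v : Fin n, Relation.ReflTransGen
    (fun p q => ¬ IntegrableOn (a q p) (Ici 0) ∨ ¬ IntegrableOn (a p q) (Ici 0)) u v

/-- The weight matrix is repeatedly strongly connected with sequence `tp` and
constant `ε` (Definition 2): on each `[t_p, t_{p+1}]`, the graph whose arcs `(j,i)`
satisfy `∫_{t_p}^{t_{p+1}} a_{ij} ≥ ε` is strongly connected. -/
def RepeatedlyStronglyConnected (n : ℕ) (a : Fin n → Fin n → ℝ → ℝ)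
    (tp : ℕ → ℝ) (ε : ℝ) : Prop :=
  tp 0 = 0 ∧ StrictMono tp ∧ Tendsto tp atTop atTop ∧ 0 < ε ∧
  ∀ p : ℕ, ∀ u v : Fin n, Relation.ReflTransGen
    (fun i j => ε ≤ ∫ t in tp p..tp (p + 1), a j i t) u v

/-- The quantity `M = sup_{i,j,p} ∫_{t_p}^{t_{p+1}} a_{ij}` is finite, bounded by `M`. -/
def MBound (n : ℕ) (a : Fin n → Fin n → ℝ → ℝ) (tp : ℕ → ℝ) (M : ℝ) : Prop :=
  ∀ p : ℕ, ∀ i j : Fin n, (∫ t in tp p..tp (p + 1), a i j t) ≤ M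

end

section Aux

open Real

/-- Invariance of upper bounds: if `x` is bounded above by `M` on the initial window
`[t₁ - h̄, t₁]`, it stays bounded by `M` for all `t ≥ t₁`. -/
lemma key_invariance (n : ℕ) (hn : 1 ≤ n) (abar hbar : ℝ)
    (habar : 0 ≤ abar) (hhbar : 0 ≤ hbar)
    (a h : Fin n → Fin n → ℝ → ℝ)
    (ha : GoodWeights n abar a) (hh : GoodDelays n hbar h)
    (t0 : ℝ) (ht0 : 0 ≤ t0) (x D : ℝ → Fin n → ℝ)
    (hx : IsSolIneq n a h hbar t0 x D)
    (t1 : ℝ) (ht1 : t0 ≤ t1) (M : ℝ)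
    (hM : ∀ i : Fin n, ∀ s ∈ Icc (t1 - hbar) t1, x s i ≤ M)
    (t : ℝ) (htt : t1 ≤ t) (i : Fin n) : x t i ≤ M := by
  obtain ⟨hloc, hint, hrep, hae⟩ := hx
  set K : ℝ := (n : ℝ) * abar with hKdef
  have hK : 0 ≤ K := mul_nonneg (Nat.cast_nonneg n) habar
  set L : ℝ := K + 1 with hLdef
  have hL1 : 1 ≤ L := by simp [hLdef]; linarith
  have hL0 : 0 < L := by linarith
  -- continuity of each coordinate on [t0, t]
  have hcont : ∀ j : Fin n, ContinuousOn (fun s => x s j) (Icc t0 t) := by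
    intro j
    have h1 : ContinuousOn (fun s => x t0 j + ∫ u in t0..s, D u j) (Icc t0 t) := by
      apply continuousOn_const.add
      have := intervalIntegral.continuousOn_primitive_interval
        (f := fun u => D u j) (μ := volume) (a := t0) (b := t)
        (by rw [uIcc_of_le (le_trans ht1 htt)]; exact hint j t)
      rwa [uIcc_of_le (le_trans ht1 htt)] at this
    exact h1.congr (fun s hs => hrep j s hs.1)
  -- reduce to an ε-barrier estimate
  suffices H : ∀ ε : ℝ, 0 < ε → x t i ≤ M + ε * Real.exp (L * (t - t1)) by
    by_contra hgt
    push_neg at hgt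
    set E := Real.exp (L * (t - t1)) with hE
    have hEpos : 0 < E := Real.exp_pos _
    have hε : 0 < (x t i - M) / (2 * E) := div_pos (by linarith) (by positivity)
    have := H _ hε
    have heq : (x t i - M) / (2 * E) * E = (x t i - M) / 2 := by
      field_simp
    rw [heq] at this
    linarith
  intro ε hε
  set B : ℝ → ℝ := fun s => M + ε * Real.exp (L * (s - t1)) with hB
  have hBmono : ∀ u v : ℝ, u ≤ v → B u ≤ B v := by
    intro u v huv
    have : Real.exp (L * (u - t1)) ≤ Real.exp (L * (v - t1)) := by
      apply Real.exp_le_exp.2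
      nlinarith
    simp only [hB]
    nlinarith
  have hBgtM : ∀ s : ℝ, M < B s := by
    intro s
    have : 0 < ε * Real.exp (L * (s - t1)) := by positivity
    simp only [hB]; linarith
  have hBcont : Continuous B := by
    apply continuous_const.add
    exact continuous_const.mul
      (Real.continuous_exp.comp (continuous_const.mul (continuous_id.sub continuous_const)))
  -- main claim: x stays strictly below the barrier on [t1, t]
  suffices hclaim : ∀ s ∈ Icc t1 t, ∀ j : Fin n, x s j ≤ B s by
    exact hclaim t ⟨htt, le_rfl⟩ i
  by_contra hcon
  push_neg at hcon
  set S : Set ℝ := {s | s ∈ Icc t1 t ∧ ∃ j : Fin n, B s ≤ x s j} with hSdef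
  have hSne : S.Nonempty := by
    obtain ⟨s, hs, j, hj⟩ := hcon
    exact ⟨s, hs, j, hj.le⟩
  have hIccsub : Icc t1 t ⊆ Icc t0 t := Icc_subset_Icc ht1 le_rfl
  have hSclosed : IsClosed S := by
    have : S = ⋃ j : Fin n, (Icc t1 t ∩ (fun s => x s j - B s) ⁻¹' Ici 0) := by
      ext s
      simp only [hSdef, mem_setOf_eq, mem_iUnion, mem_inter_iff, mem_preimage, mem_Ici,
        sub_nonneg]
      tauto
    rw [this]
    apply isClosed_iUnion_of_finite
    intro j
    exact ContinuousOn.preimage_isClosed_of_isClosed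
      (((hcont j).sub hBcont.continuousOn).mono hIccsub) isClosed_Icc isClosed_Ici
  have hSbdd : BddBelow S := ⟨t1, fun s hs => hs.1.1⟩
  set τ : ℝ := sInf S with hτdef
  have hτS : τ ∈ S := hSclosed.csInf_mem hSne hSbdd
  obtain ⟨⟨hτ1, hτt⟩, i0, hi0⟩ := hτS
  have hτ0 : t0 ≤ τ := le_trans ht1 hτ1
  -- τ > t1
  have ht1τ : t1 < τ := by
    rcases lt_or_eq_of_le hτ1 with h' | h'
    · exact h'
    · exfalso
      have := hM i0 t1 ⟨by linarith, le_rfl⟩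
      have := hBgtM t1
      rw [← h'] at hi0
      linarith
  -- strictly below barrier before τ
  have hbefore : ∀ u ∈ Ico t1 τ, ∀ j : Fin n, x u j < B u := by
    intro u ⟨hu1, hu2⟩ j
    by_contra hge
    push_neg at hge
    have huS : u ∈ S := ⟨⟨hu1, le_trans hu2.le hτt⟩, j, hge⟩
    have := csInf_le hSbdd huS
    rw [← hτdef] at this
    linarith
  -- at τ, all coordinates are ≤ barrier (limit argument)
  have hatτ : ∀ j : Fin n, x τ j ≤ B τ := by
    intro j
    have hne : (Ico t1 τ).Nonempty := nonempty_Ico.2 ht1τ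
    have hclos : τ ∈ closure (Ico t1 τ) := by
      rw [closure_Ico (ne_of_lt ht1τ)]
      exact ⟨ht1τ.le, le_rfl⟩
    haveI : (nhdsWithin τ (Ico t1 τ)).NeBot :=
      mem_closure_iff_nhdsWithin_neBot.mp hclos
    have htend : Tendsto (fun u => x u j - B u) (nhdsWithin τ (Ico t1 τ))
        (nhds (x τ j - B τ)) := by
      have hcw : ContinuousWithinAt (fun u => x u j - B u) (Icc t0 t) τ :=
        ((hcont j).sub hBcont.continuousOn) τ ⟨hτ0, hτt⟩
      exact hcw.mono (fun u hu => ⟨le_trans ht1 hu.1, le_trans hu.2.le hτt⟩)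
    have hev : ∀ᶠ u in nhdsWithin τ (Ico t1 τ), x u j - B u ≤ 0 := by
      filter_upwards [self_mem_nhdsWithin] with u hu
      linarith [hbefore u hu j]
    have := le_of_tendsto htend hev
    linarith
  -- on [t1, τ] all coordinates are ≤ barrier
  have hIccτ : ∀ u ∈ Icc t1 τ, ∀ j : Fin n, x u j ≤ B u := by
    intro u ⟨hu1, hu2⟩ j
    rcases lt_or_eq_of_le hu2 with h' | h'
    · exact (hbefore u ⟨hu1, h'⟩ j).le
    · rw [h']; exact hatτ j
  -- delayed values are ≤ B s for s ∈ [t1, τ]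
  have hwin : ∀ s ∈ Icc t1 τ, ∀ j : Fin n, ∀ u : ℝ,
      s - hbar ≤ u → u ≤ s → x u j ≤ B s := by
    intro s ⟨hs1, hs2⟩ j u hu1 hu2
    rcases le_or_gt u t1 with h' | h'
    · have : x u j ≤ M := hM j u ⟨by linarith, h'⟩
      linarith [hBgtM s]
    · have : x u j ≤ B u := hIccτ u ⟨h'.le, le_trans hu2 hs2⟩ j
      linarith [hBmono u s hu2]
  -- choose τ' close to τ so that B s - x s i0 < ε on [τ', τ]
  have hg : ContinuousWithinAt (fun s => B s - x s i0) (Icc t0 t) τ :=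
    (hBcont.continuousOn.sub (hcont i0)) τ ⟨hτ0, hτt⟩
  have hgτ : B τ - x τ i0 ≤ 0 := by linarith
  have hev : ∀ᶠ s in nhdsWithin τ (Icc t0 t), B s - x s i0 < ε :=
    Filter.Tendsto.eventually_lt_const (by linarith : B τ - x τ i0 < ε) hg
  rw [Filter.eventually_iff, Metric.mem_nhdsWithin_iff] at hev
  obtain ⟨η, hη, hball⟩ := hev
  set τ' : ℝ := max t1 (τ - η / 2) with hτ'def
  have hτ'1 : t1 ≤ τ' := le_max_left _ _
  have hτ'lt : τ' < τ := max_lt ht1τ (by linarith)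
  have hτ'0 : t0 ≤ τ' := le_trans ht1 hτ'1
  have hτ'near : ∀ s ∈ Icc τ' τ, B s - x s i0 < ε := by
    intro s ⟨hs1, hs2⟩
    refine hball ⟨Metric.mem_ball.2 ?_, ⟨le_trans hτ'0 hs1, le_trans hs2 hτt⟩⟩
    rw [Real.dist_eq, abs_sub_lt_iff]
    have : τ - η / 2 ≤ τ' := le_max_right _ _
    constructor <;> linarith
  -- a.e. bound on D on [τ', τ]
  have hDle : (fun s => D s i0) ≤ᵐ[volume.restrict (Icc τ' τ)] fun _ => K * ε := by
    filter_upwards [MeasureTheory.ae_restrict_mem measurableSet_Icc,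
      MeasureTheory.ae_restrict_of_ae (μ := volume) (s := Icc τ' τ) hae] with s hs hDs
    have hs0 : (0 : ℝ) ≤ s := le_trans ht0 (le_trans hτ'0 hs.1)
    have hst0 : t0 ≤ s := le_trans hτ'0 hs.1
    have hsum := hDs hst0 i0
    have hterm : ∀ j : Fin n, a i0 j s * (x (s - h i0 j s) j - x s i0) ≤ abar * ε := by
      intro j
      obtain ⟨hh1, hh2⟩ := hh.2.1 i0 j s hs0
      obtain ⟨ha1, ha2⟩ := ha.2.1 i0 j s hs0
      have hxd : x (s - h i0 j s) j ≤ B s :=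
        hwin s ⟨le_trans hτ'1 hs.1, hs.2⟩ j (s - h i0 j s) (by linarith) (by linarith)
      have hx0 : B s - x s i0 < ε := hτ'near s hs
      have h1 : x (s - h i0 j s) j - x s i0 ≤ ε := by linarith
      calc a i0 j s * (x (s - h i0 j s) j - x s i0) ≤ a i0 j s * ε :=
            mul_le_mul_of_nonneg_left h1 ha1
        _ ≤ abar * ε := mul_le_mul_of_nonneg_right ha2 hε.le
    calc D s i0 ≤ ∑ j : Fin n, a i0 j s * (x (s - h i0 j s) j - x s i0) := hsum
      _ ≤ ∑ _j : Fin n, abar * ε := Finset.sum_le_sum (fun j _ => hterm j)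
      _ = K * ε := by
          rw [Finset.sum_const, Finset.card_univ, Fintype.card_fin]
          simp [hKdef]; ring
  -- integrability
  have hiτ : IntervalIntegrable (fun s => D s i0) volume t0 τ := by
    apply MeasureTheory.IntegrableOn.intervalIntegrable
    rw [uIcc_of_le hτ0]
    exact (hint i0 t).mono_set (Icc_subset_Icc le_rfl hτt)
  have hiτ' : IntervalIntegrable (fun s => D s i0) volume t0 τ' := by
    apply MeasureTheory.IntegrableOn.intervalIntegrable
    rw [uIcc_of_le hτ'0]
    exact (hint i0 t).mono_set (Icc_subset_Icc le_rfl (le_trans hτ'lt.le hτt))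
  have hiττ' : IntervalIntegrable (fun s => D s i0) volume τ' τ := by
    apply MeasureTheory.IntegrableOn.intervalIntegrable
    rw [uIcc_of_le hτ'lt.le]
    exact (hint i0 t).mono_set (Icc_subset_Icc hτ'0 hτt)
  -- integral estimate
  have hxdiff : x τ i0 - x τ' i0 = ∫ s in τ'..τ, D s i0 := by
    rw [hrep i0 τ hτ0, hrep i0 τ' hτ'0]
    rw [add_sub_add_left_eq_sub]
    exact intervalIntegral.integral_interval_sub_left hiτ hiτ'
  have hintle : (∫ s in τ'..τ, D s i0) ≤ (τ - τ') * (K * ε) := by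
    have := intervalIntegral.integral_mono_ae_restrict hτ'lt.le hiττ'
      (_root_.intervalIntegrable_const (c := K * ε)) hDle
    rwa [intervalIntegral.integral_const, smul_eq_mul] at this
  -- barrier growth estimate
  have hBdiff : (K + 1) * ε * (τ - τ') ≤ B τ - B τ' := by
    have hA : 0 ≤ L * (τ' - t1) := mul_nonneg hL0.le (by linarith)
    have hBA : L * (τ - t1) - L * (τ' - t1) = L * (τ - τ') := by ring
    have he1 : Real.exp (L * (τ' - t1)) * Real.exp (L * (τ - τ')) =
        Real.exp (L * (τ - t1)) := by
      rw [← Real.exp_add]; ring_nf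
    have he2 : 1 ≤ Real.exp (L * (τ' - t1)) := Real.one_le_exp hA
    have he3 : L * (τ - τ') + 1 ≤ Real.exp (L * (τ - τ')) :=
      Real.add_one_le_exp _
    have hττ' : 0 ≤ L * (τ - τ') := mul_nonneg hL0.le (by linarith)
    have key : L * (τ - τ') ≤ Real.exp (L * (τ - t1)) - Real.exp (L * (τ' - t1)) := by
      nlinarith [Real.exp_pos (L * (τ' - t1))]
    have : (K + 1) * ε * (τ - τ') = ε * (L * (τ - τ')) := by rw [hLdef]; ring
    rw [this]
    have : B τ - B τ' = ε * (Real.exp (L * (τ - t1)) - Real.exp (L * (τ' - t1))) := by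
      simp only [hB]; ring
    rw [this]
    exact mul_le_mul_of_nonneg_left key hε.le
  -- final contradiction
  have hτ'lt_barrier : x τ' i0 < B τ' := hbefore τ' ⟨hτ'1, hτ'lt⟩ i0
  have hpos : 0 < ε * (τ - τ') := mul_pos hε (by linarith)
  nlinarith [hi0, hxdiff, hintle, hBdiff]

end Aux

theorem stmt0 (n : ℕ) (hn : 1 ≤ n) (abar hbar : ℝ) (habar : 0 ≤ abar) (hhbar : 0 ≤ hbar)
    (a h : Fin n → Fin n → ℝ → ℝ)
    (ha : GoodWeights n abar a) (hh : GoodDelays n hbar h)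
    (t0 : ℝ) (ht0 : 0 ≤ t0) (x D : ℝ → Fin n → ℝ)
    (hx : IsSolIneq n a h hbar t0 x D) :
    AntitoneOn (Lam n hbar x) (Ici t0) := by
  haveI : Nonempty (Fin n) := ⟨⟨0, hn⟩⟩
  intro t1 ht1 t2 ht2 h12
  simp only [mem_Ici] at ht1 ht2
  have hbddimg : ∀ (t' : ℝ), t0 ≤ t' → ∀ i : Fin n,
      BddAbove ((fun s => x s i) '' Icc (t' - hbar) t') := by
    intro t' ht' i
    obtain ⟨C, hC⟩ := hx.1 t'
    refine ⟨C, ?_⟩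
    rintro y ⟨s, hs, rfl⟩
    exact le_trans (le_abs_self _) (hC i s ⟨by linarith [hs.1], hs.2⟩)
  have himgne : ∀ (t' : ℝ) (i : Fin n),
      ((fun s => x s i) '' Icc (t' - hbar) t').Nonempty :=
    fun t' i => (nonempty_Icc.2 (by linarith)).image _
  have hLam_ge : ∀ s ∈ Icc (t1 - hbar) t1, ∀ i : Fin n, x s i ≤ Lam n hbar x t1 := by
    intro s hs i
    have h1 : x s i ≤ sSup ((fun s => x s i) '' Icc (t1 - hbar) t1) :=
      le_csSup (hbddimg t1 ht1 i) ⟨s, hs, rfl⟩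
    have h2 : sSup ((fun s => x s i) '' Icc (t1 - hbar) t1) ≤ Lam n hbar x t1 :=
      le_ciSup (f := fun i : Fin n => sSup ((fun s => x s i) '' Icc (t1 - hbar) t1))
        (Set.Finite.bddAbove (Set.finite_range _)) i
    exact le_trans h1 h2
  have hkey := key_invariance n hn abar hbar habar hhbar a h ha hh t0 ht0 x D hx
    t1 ht1 (Lam n hbar x t1) (fun i s hs => hLam_ge s hs i)
  show Lam n hbar x t2 ≤ Lam n hbar x t1
  apply ciSup_le
  intro i
  apply csSup_le (himgne t2 i)
  rintro y ⟨s, hs, rfl⟩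
  rcases le_or_gt s t1 with h' | h'
  · exact hLam_ge s ⟨by linarith [hs.1], h'⟩ i
  · exact hkey s h'.le i
end

section
/- Let ξ ≥ 0 and let x be a solution of the delayed consensus equation on [ξ,∞) with initial data x(ξ) = v and x(s) = 0 for all s ∈ [ξ−h̄,ξ). If 0 ≤ v_i ≤ 1 for every i ∈ [1:n], then 0 ≤ x_i(t) ≤ 1 for every i ∈ [1:n] and every t ≥ ξ. (In particular, the evolutionary matrix U(t,ξ) of the delayed consensus dynamics is substochastic: it is nonnegative and satisfies U(t,ξ)𝟙 ≤ 𝟙.) -/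
open MeasureTheory Set Filter intervalIntegral

set_option maxHeartbeats 1000000 in
theorem stmt2 (n : ℕ) (hn : 1 ≤ n) (abar hbar : ℝ) (habar : 0 ≤ abar) (hhbar : 0 ≤ hbar)
    (a h : Fin n → Fin n → ℝ → ℝ)
    (ha : GoodWeights n abar a) (hh : GoodDelays n hbar h)
    (ξ : ℝ) (hξ : 0 ≤ ξ) (v : Fin n → ℝ) (hv : ∀ i, 0 ≤ v i ∧ v i ≤ 1)
    (x D : ℝ → Fin n → ℝ) (hx : IsSolEq n a h hbar ξ x D)
    (hinit : ∀ i, x ξ i = v i)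
    (hpast : ∀ s ∈ Ico (ξ - hbar) ξ, ∀ i, x s i = 0) :
    ∀ i : Fin n, ∀ t : ℝ, ξ ≤ t → 0 ≤ x t i ∧ x t i ≤ 1 := by
  obtain ⟨hameas, habnd, hadiag⟩ := ha
  obtain ⟨hhmeas, hhbnd, hhdiag⟩ := hh
  obtain ⟨hlocb, hDint, hrep, heq⟩ := hx
  set K : ℝ := (n : ℝ) * abar + 1 with hKdef
  have hKpos : 0 < K := by positivity
  have hKge : (n : ℝ) * abar ≤ K := by simp only [hKdef]; linarith
  clear_value K
  -- continuity of each coordinate of x on [ξ, T]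
  have hcont : ∀ (i : Fin n) (T : ℝ), ξ ≤ T → ContinuousOn (fun t => x t i) (Icc ξ T) := by
    intro i T hT
    have hint : IntegrableOn (fun s => D s i) (uIcc ξ T) volume := by
      rw [uIcc_of_le hT]; exact hDint i T
    have h1 : ContinuousOn (fun t => x ξ i + ∫ s in ξ..t, D s i) (Icc ξ T) := by
      have := intervalIntegral.continuousOn_primitive_interval (f := fun s => D s i)
        (μ := volume) (a := ξ) (b := T) hint
      rw [uIcc_of_le hT] at this
      exact continuousOn_const.add this
    refine h1.congr ?_
    intro t ht
    exact hrep i t ht.1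
  -- main barrier claim
  have main : ∀ ε : ℝ, 0 < ε → ∀ T : ℝ, ∀ t ∈ Icc ξ T, ∀ i : Fin n,
      |x t i - 1/2| < 1/2 + ε * Real.exp (2*K*(t-ξ)) := by
    intro ε hε T
    by_contra hcon
    push_neg at hcon
    obtain ⟨t0, ht0, i0, hi0⟩ := hcon
    have hξT : ξ ≤ T := le_trans ht0.1 ht0.2
    set β : ℝ → ℝ := fun t => 1/2 + ε * Real.exp (2*K*(t-ξ)) with hβdef
    have hβcont : Continuous β := by
      apply continuous_const.add
      exact continuous_const.mul (Real.continuous_exp.comp (by fun_prop))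
    have hβmono : Monotone β := by
      intro u w huw
      have h1 : Real.exp (2*K*(u-ξ)) ≤ Real.exp (2*K*(w-ξ)) :=
        Real.exp_le_exp.2 (by nlinarith)
      simp only [hβdef]
      nlinarith
    have hβhalf : ∀ t, 1/2 < β t := by
      intro t
      have := Real.exp_pos (2*K*(t-ξ))
      simp only [hβdef]
      nlinarith
    clear_value β
    set S : Set ℝ := {t | t ∈ Icc ξ T ∧ ∃ i, β t ≤ |x t i - 1/2|} with hSdef
    have hSne : S.Nonempty := ⟨t0, ht0, i0, by rw [hβdef]; simpa using hi0⟩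
    have hSclosed : IsClosed S := by
      have hSeq : S = ⋃ i : Fin n, (Icc ξ T ∩ (fun t => |x t i - 1/2| - β t) ⁻¹' Ici 0) := by
        ext t
        simp only [hSdef, mem_setOf_eq, mem_iUnion, mem_inter_iff, mem_preimage, mem_Ici,
          sub_nonneg]
        tauto
      rw [hSeq]
      apply isClosed_iUnion_of_finite
      intro i
      have hc : ContinuousOn (fun t => |x t i - 1/2| - β t) (Icc ξ T) :=
        (((hcont i T hξT).sub continuousOn_const).abs).sub hβcont.continuousOn
      exact hc.preimage_isClosed_of_isClosed isClosed_Icc isClosed_Ici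
    have hSbdd : BddBelow S := ⟨ξ, fun s hs => hs.1.1⟩
    set τ := sInf S with hτdef
    have hτS : τ ∈ S := hSclosed.csInf_mem hSne hSbdd
    obtain ⟨hτmem, i, hiτ⟩ := hτS
    have hτmin : ∀ s, ξ ≤ s → s < τ → ∀ j, |x s j - 1/2| < β s := by
      intro s hs1 hs2 j
      by_contra hcc
      push_neg at hcc
      have hmem : s ∈ S := ⟨⟨hs1, le_trans hs2.le hτmem.2⟩, j, hcc⟩
      exact absurd (csInf_le hSbdd hmem) (not_le.2 hs2)
    clear_value τ
    have hξτ : ξ < τ := by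
      rcases lt_or_eq_of_le hτmem.1 with hcase | hcase
      · exact hcase
      · exfalso
        rw [← hcase] at hiτ
        rw [hinit i] at hiτ
        have h1 := (hv i).1
        have h2 := (hv i).2
        have h3 : |v i - 1/2| ≤ 1/2 := abs_le.2 ⟨by linarith, by linarith⟩
        have h4 := hβhalf ξ
        linarith
    -- continuity of x · i at τ within Icc ξ T
    have hxc : ContinuousWithinAt (fun t => x t i) (Icc ξ T) τ :=
      (hcont i T hξT) τ ⟨hτmem.1, hτmem.2⟩
    rw [Metric.continuousWithinAt_iff] at hxc
    obtain ⟨δ, hδpos, hδ⟩ := hxc ε hε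
    set δ' := min (δ/2) (τ - ξ) with hδ'def
    have hδ'pos : 0 < δ' := lt_min (by linarith) (by linarith)
    have hδ'le : δ' ≤ τ - ξ := min_le_right _ _
    have hδ'le2 : δ' ≤ δ/2 := min_le_left _ _
    clear_value δ'
    have hnear : ∀ s ∈ Icc (τ - δ') τ, |x s i - x τ i| < ε := by
      intro s hs
      have hsIcc : s ∈ Icc ξ T := ⟨by linarith [hs.1], le_trans hs.2 hτmem.2⟩
      have hd : dist s τ < δ := by
        rw [Real.dist_eq, abs_sub_lt_iff]
        constructor <;> nlinarith [hs.1, hs.2, hδ'le2, hδpos]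
      have := hδ hsIcc hd
      rwa [Real.dist_eq] at this
    -- bounds on delayed values for s < τ
    have hdel : ∀ s, ξ ≤ s → s < τ → ∀ j k : Fin n,
        -(β τ) ≤ x (s - h j k s) k - 1/2 ∧ x (s - h j k s) k - 1/2 ≤ β τ := by
      intro s hs1 hs2 j k
      have hs0 : (0:ℝ) ≤ s := le_trans hξ hs1
      obtain ⟨hh1, hh2⟩ := hhbnd j k s hs0
      set s' := s - h j k s with hs'def
      have hs'le : s' ≤ s := by simp only [hs'def]; linarith
      have hβτ := hβhalf τ
      rcases lt_or_ge s' ξ with hcase | hcase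
      · have hz : x s' k = 0 := hpast s' ⟨by simp only [hs'def]; linarith, hcase⟩ k
        rw [hz]
        constructor <;> linarith
      · have hb := hτmin s' hcase (lt_of_le_of_lt hs'le hs2) k
        have hmb : β s' ≤ β τ := hβmono (le_trans hs'le hs2.le)
        rw [abs_lt] at hb
        exact ⟨le_trans (neg_le_neg hmb) hb.1.le, le_trans hb.2.le hmb⟩
    -- integrability and integral identity
    have hτξ' : ξ ≤ τ - δ' := by linarith
    have hIτ : IntervalIntegrable (fun s => D s i) volume ξ τ := by
      apply IntegrableOn.intervalIntegrable
      rw [uIcc_of_le (le_of_lt hξτ)]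
      exact (hDint i T).mono_set (Icc_subset_Icc le_rfl hτmem.2)
    have hIτδ : IntervalIntegrable (fun s => D s i) volume ξ (τ - δ') := by
      apply IntegrableOn.intervalIntegrable
      rw [uIcc_of_le hτξ']
      exact (hDint i T).mono_set (Icc_subset_Icc le_rfl (by linarith [hτmem.2]))
    have hxdif : x τ i - x (τ - δ') i = ∫ s in (τ - δ')..τ, D s i := by
      rw [hrep i τ (le_of_lt hξτ), hrep i (τ - δ') hτξ']
      have := intervalIntegral.integral_interval_sub_left hIτ hIτδ
      linarith [this]
    have hIoo_sub : Ioo (τ - δ') τ ⊆ Icc ξ T :=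
      fun s hs => ⟨by linarith [hs.1], le_trans hs.2.le hτmem.2⟩
    have hDIoo : IntegrableOn (fun s => D s i) (Ioo (τ - δ') τ) volume :=
      (hDint i T).mono_set hIoo_sub
    have hconstIoo : ∀ c : ℝ, IntegrableOn (fun _ => c) (Ioo (τ - δ') τ) volume := by
      intro c
      exact integrableOn_const measure_Ioo_lt_top.ne
    have hvolIoo : (volume (Ioo (τ - δ') τ)).toReal = δ' := by
      rw [Real.volume_Ioo, ENNReal.toReal_ofReal (by linarith)]
      ring
    -- the a.e. hypothesis restricted to Ioo
    have haes : ∀ᵐ s ∂(volume.restrict (Ioo (τ - δ') τ)),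
        (ξ ≤ s → ∀ i, D s i = ∑ j, a i j s * (x (s - h i j s) j - x s i)) ∧
        s ∈ Ioo (τ - δ') τ := by
      refine Filter.Eventually.and ?_ (ae_restrict_mem measurableSet_Ioo)
      exact ae_restrict_of_ae heq
    have hKεδ : 0 < K * ε * δ' := by positivity
    have hβgap : β (τ - δ') + 2*(K * ε * δ') ≤ β τ := by
      have e1 : Real.exp (2*K*(τ-ξ)) = Real.exp (2*K*(τ-δ'-ξ)) * Real.exp (2*K*δ') := by
        rw [← Real.exp_add]; ring_nf
      have e2 : 1 ≤ Real.exp (2*K*(τ-δ'-ξ)) := Real.one_le_exp (by nlinarith)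
      have e3 : 2*K*δ' + 1 ≤ Real.exp (2*K*δ') := Real.add_one_le_exp _
      have p1 : 0 ≤ (Real.exp (2*K*(τ-δ'-ξ)) - 1) * (2*K*δ') :=
        mul_nonneg (by linarith) (by positivity)
      have p2 : 0 ≤ Real.exp (2*K*(τ-δ'-ξ)) * (Real.exp (2*K*δ') - (2*K*δ'+1)) :=
        mul_nonneg (Real.exp_pos _).le (by linarith)
      have e5 : Real.exp (2*K*(τ-δ'-ξ)) + 2*K*δ'
          ≤ Real.exp (2*K*(τ-δ'-ξ)) * Real.exp (2*K*δ') := by nlinarith [p1, p2]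
      have p3 := mul_le_mul_of_nonneg_left e5 hε.le
      simp only [hβdef]
      rw [e1]
      nlinarith [p3]
    have hprev : |x (τ - δ') i - 1/2| < β (τ - δ') :=
      hτmin (τ - δ') hτξ' (by linarith) i
    rw [abs_lt] at hprev
    rcases le_abs.1 hiτ with hpos | hneg
    · -- upper crossing: x τ i - 1/2 ≥ β τ
      have haebnd : ∀ᵐ s ∂(volume.restrict (Ioo (τ - δ') τ)), D s i ≤ K * ε := by
        filter_upwards [haes] with s ⟨hseq, hsmem⟩
        have hsξ : ξ ≤ s := by linarith [hsmem.1]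
        have hsτ : s < τ := hsmem.2
        rw [hseq hsξ i]
        have hzi := hτmin s hsξ hsτ i
        rw [abs_lt] at hzi
        have hβs : β s ≤ β τ := hβmono hsτ.le
        have hzn : |x s i - x τ i| < ε := hnear s ⟨by linarith [hsmem.1], hsτ.le⟩
        rw [abs_lt] at hzn
        have hw0 : 0 ≤ β τ - (x s i - 1/2) := by linarith [hzi.2]
        have hwε : β τ - (x s i - 1/2) ≤ ε := by linarith [hzn.1]
        calc ∑ j, a i j s * (x (s - h i j s) j - x s i)
            ≤ ∑ _j : Fin n, abar * ε := by
              apply Finset.sum_le_sum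
              intro j _
              have ha1 := (habnd i j s (le_trans hξ hsξ)).1
              have ha2 := (habnd i j s (le_trans hξ hsξ)).2
              have hdv := (hdel s hsξ hsτ i j).2
              have hd : x (s - h i j s) j - x s i ≤ β τ - (x s i - 1/2) := by linarith
              calc a i j s * (x (s - h i j s) j - x s i)
                  ≤ a i j s * (β τ - (x s i - 1/2)) := by
                    exact mul_le_mul_of_nonneg_left hd ha1
                _ ≤ abar * (β τ - (x s i - 1/2)) := mul_le_mul_of_nonneg_right ha2 hw0
                _ ≤ abar * ε := mul_le_mul_of_nonneg_left hwε habar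
          _ = (n : ℝ) * (abar * ε) := by
              rw [Finset.sum_const, Finset.card_univ, Fintype.card_fin, nsmul_eq_mul]
          _ ≤ K * ε := by nlinarith [hKge, hε]
      have hIbound : ∫ s in (τ - δ')..τ, D s i ≤ K * ε * δ' := by
        rw [intervalIntegral.integral_of_le (by linarith), integral_Ioc_eq_integral_Ioo]
        calc ∫ s in Ioo (τ - δ') τ, D s i
            ≤ ∫ _s in Ioo (τ - δ') τ, K * ε :=
              setIntegral_mono_ae_restrict hDIoo (hconstIoo _) haebnd
          _ = K * ε * δ' := by rw [setIntegral_const, measureReal_def, hvolIoo, smul_eq_mul]; ring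
      have : x τ i - 1/2 < β τ := by
        have h1 : x τ i = x (τ - δ') i + ∫ s in (τ - δ')..τ, D s i := by linarith [hxdif]
        linarith [hprev.2]
      linarith
    · -- lower crossing: x τ i - 1/2 ≤ -(β τ)
      have hneg' : x τ i - 1/2 ≤ -(β τ) := by linarith
      have haebnd : ∀ᵐ s ∂(volume.restrict (Ioo (τ - δ') τ)), -(K * ε) ≤ D s i := by
        filter_upwards [haes] with s ⟨hseq, hsmem⟩
        have hsξ : ξ ≤ s := by linarith [hsmem.1]
        have hsτ : s < τ := hsmem.2
        rw [hseq hsξ i]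
        have hzi := hτmin s hsξ hsτ i
        rw [abs_lt] at hzi
        have hβs : β s ≤ β τ := hβmono hsτ.le
        have hzn : |x s i - x τ i| < ε := hnear s ⟨by linarith [hsmem.1], hsτ.le⟩
        rw [abs_lt] at hzn
        have hw0 : 0 ≤ β τ + (x s i - 1/2) := by linarith [hzi.1]
        have hwε : β τ + (x s i - 1/2) ≤ ε := by linarith [hzn.2]
        calc -(K * ε) ≤ (n : ℝ) * (-(abar * ε)) := by nlinarith [hKge, hε]
          _ = ∑ _j : Fin n, -(abar * ε) := by
              rw [Finset.sum_const, Finset.card_univ, Fintype.card_fin, nsmul_eq_mul]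
          _ ≤ ∑ j, a i j s * (x (s - h i j s) j - x s i) := by
              apply Finset.sum_le_sum
              intro j _
              have ha1 := (habnd i j s (le_trans hξ hsξ)).1
              have ha2 := (habnd i j s (le_trans hξ hsξ)).2
              have hdv := (hdel s hsξ hsτ i j).1
              have hd : -(β τ + (x s i - 1/2)) ≤ x (s - h i j s) j - x s i := by linarith
              calc -(abar * ε) ≤ abar * (-(β τ + (x s i - 1/2))) := by nlinarith
                _ ≤ a i j s * (-(β τ + (x s i - 1/2))) := by nlinarith
                _ ≤ a i j s * (x (s - h i j s) j - x s i) :=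
                    mul_le_mul_of_nonneg_left hd ha1
      have hIbound : -(K * ε * δ') ≤ ∫ s in (τ - δ')..τ, D s i := by
        rw [intervalIntegral.integral_of_le (by linarith), integral_Ioc_eq_integral_Ioo]
        calc -(K * ε * δ') = ∫ _s in Ioo (τ - δ') τ, -(K * ε) := by
              rw [setIntegral_const, measureReal_def, hvolIoo, smul_eq_mul]; ring
          _ ≤ ∫ s in Ioo (τ - δ') τ, D s i :=
              setIntegral_mono_ae_restrict (hconstIoo _) hDIoo haebnd
      have : -(β τ) < x τ i - 1/2 := by
        have h1 : x τ i = x (τ - δ') i + ∫ s in (τ - δ')..τ, D s i := by linarith [hxdif]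
        linarith [hprev.1]
      linarith
  -- conclude
  intro i t ht
  have key : ∀ c : ℝ, 0 < c → |x t i - 1/2| ≤ 1/2 + c := by
    intro c hc
    have hexp := Real.exp_pos (2*K*(t-ξ))
    have hε : 0 < c / Real.exp (2*K*(t-ξ)) := div_pos hc hexp
    have hm := main _ hε t t ⟨ht, le_refl t⟩ i
    rw [div_mul_cancel₀ _ (ne_of_gt hexp)] at hm
    exact hm.le
  have habs : |x t i - 1/2| ≤ 1/2 := by
    by_contra hcc
    push_neg at hcc
    have := key ((|x t i - 1/2| - 1/2)/2) (by linarith)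
    linarith
  rw [abs_le] at habs
  constructor <;> linarith [habs.1, habs.2]
end

section
/- Let ξ ≥ 0 and let x be a solution of the delayed consensus equation on [ξ,∞) with initial data x_i(ξ) = 1 for all i ∈ [1:n] and x(s) = 0 for all s ∈ [ξ−h̄,ξ). Then x_i(t) ≥ ψ for every i ∈ [1:n] and every t ≥ ξ, where ψ := e^{−(n−1)·ā·h̄}. (In particular, the evolutionary matrix U(t,ξ) satisfies U(t,ξ)𝟙 ≥ ψ𝟙.) -/
open MeasureTheory Set Filter intervalIntegral

open MeasureTheory Set Filter intervalIntegral in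
private lemma expInt {c u t : ℝ} (hut : u ≤ t) :
    ∫ s in Icc u t, c * Real.exp (c * s) = Real.exp (c * t) - Real.exp (c * u) := by
  rw [MeasureTheory.integral_Icc_eq_integral_Ioc, ← intervalIntegral.integral_of_le hut]
  have hd : ∀ s ∈ uIcc u t, HasDerivAt (fun y => Real.exp (c * y)) (c * Real.exp (c * s)) s := by
    intro s _
    have h1 : HasDerivAt (fun y : ℝ => c * y) c s := by
      simpa using (hasDerivAt_id s).const_mul c
    simpa [mul_comm] using h1.exp
  exact intervalIntegral.integral_eq_sub_of_hasDerivAt hd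
    ((continuous_const.mul (Real.continuous_exp.comp (continuous_const.mul
      continuous_id))).intervalIntegrable u t)

open MeasureTheory Set Filter in
private lemma mulCont {g : ℝ → ℝ} {A t : ℝ} (hg : IntegrableOn g (Icc A t))
    {φ : ℝ → ℝ} (hφ : Continuous φ) :
    IntegrableOn (fun u => φ u * g u) (Icc A t) := by
  rcases le_or_gt A t with hAt | hAt
  · have h1 : IntervalIntegrable g volume A t := by
      rw [intervalIntegrable_iff_integrableOn_Ioc_of_le hAt]
      exact hg.mono_set Set.Ioc_subset_Icc_self
    have h2 := h1.continuousOn_mul hφ.continuousOn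
    rw [intervalIntegrable_iff_integrableOn_Ioc_of_le hAt] at h2
    rw [integrableOn_Icc_iff_integrableOn_Ioc]
    exact h2
  · rw [Set.Icc_eq_empty (not_le.mpr hAt)]
    simp

open MeasureTheory Set Filter in
private lemma fubStep {g : ℝ → ℝ} {A t c : ℝ} (hAt : A ≤ t)
    (hg : IntegrableOn g (Icc A t)) :
    ∫ s in Icc A t, c * Real.exp (c * s) * ∫ u in Icc A s, g u
      = Real.exp (c * t) * (∫ u in Icc A t, g u) - ∫ u in Icc A t, Real.exp (c * u) * g u := by
  set μ := volume.restrict (Icc A t) with hμ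
  have hgi : Integrable g μ := hg
  have hφc : Continuous fun s : ℝ => c * Real.exp (c * s) :=
    continuous_const.mul (Real.continuous_exp.comp (continuous_const.mul continuous_id))
  have hφi : Integrable (fun s => c * Real.exp (c * s)) μ := hφc.integrableOn_Icc
  set F : ℝ × ℝ → ℝ := fun p => if p.2 ≤ p.1 then c * Real.exp (c * p.1) * g p.2 else 0 with hFdef
  have hE : MeasurableSet {p : ℝ × ℝ | p.2 ≤ p.1} := measurableSet_le measurable_snd measurable_fst
  have hFeq : F = Set.indicator {p : ℝ × ℝ | p.2 ≤ p.1}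
      (fun p => (c * Real.exp (c * p.1)) * g p.2) := by
    funext p
    by_cases hp : p.2 ≤ p.1
    · simp [hFdef, hp, Set.indicator_of_mem, Set.mem_setOf_eq]
    · simp [hFdef, hp, Set.indicator_of_notMem, Set.mem_setOf_eq]
  have hFint : Integrable F (μ.prod μ) := by
    rw [hFeq]
    exact (hφi.mul_prod hgi).indicator hE
  have hIic : ∀ s ∈ Icc A t, Icc A t ∩ Iic s = Icc A s := by
    intro s hs
    ext y
    simp only [Set.mem_inter_iff, Set.mem_Icc, Set.mem_Iic]
    exact ⟨fun hy => ⟨hy.1.1, hy.2⟩, fun hy => ⟨⟨hy.1, hy.2.trans hs.2⟩, hy.2⟩⟩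
  have hIci : ∀ u ∈ Icc A t, Icc A t ∩ Ici u = Icc u t := by
    intro u hu
    ext y
    simp only [Set.mem_inter_iff, Set.mem_Icc, Set.mem_Ici]
    exact ⟨fun hy => ⟨hy.2, hy.1.2⟩, fun hy => ⟨⟨hu.1.trans hy.1, hy.2⟩, hy.1⟩⟩
  have step1 : ∫ s in Icc A t, c * Real.exp (c * s) * ∫ u in Icc A s, g u
      = ∫ s, (∫ u, F (s, u) ∂μ) ∂μ := by
    apply MeasureTheory.setIntegral_congr_fun measurableSet_Icc
    intro s hs
    show c * Real.exp (c * s) * ∫ u in Icc A s, g u = ∫ u, F (s, u) ∂μ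
    rw [hμ]
    have e1 : (fun u => F (s, u)) = (Iic s).indicator (fun u => c * Real.exp (c * s) * g u) := by
      funext u
      by_cases hu : u ≤ s
      · simp [hFdef, hu, Set.indicator_of_mem, Set.mem_Iic]
      · simp [hFdef, hu, Set.indicator_of_notMem, Set.mem_Iic]
    rw [e1, MeasureTheory.setIntegral_indicator measurableSet_Iic, hIic s hs,
      MeasureTheory.integral_const_mul]
  have step2 : ∫ s, (∫ u, F (s, u) ∂μ) ∂μ = ∫ u, (∫ s, F (s, u) ∂μ) ∂μ := by
    apply MeasureTheory.integral_integral_swap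
    exact hFint
  have step3 : ∫ u, (∫ s, F (s, u) ∂μ) ∂μ
      = ∫ u in Icc A t, (Real.exp (c * t) - Real.exp (c * u)) * g u := by
    apply MeasureTheory.setIntegral_congr_fun measurableSet_Icc
    intro u hu
    have e1 : (fun s => F (s, u)) = (Ici u).indicator (fun s => c * Real.exp (c * s) * g u) := by
      funext s
      by_cases hs : u ≤ s
      · simp [hFdef, hs, Set.indicator_of_mem, Set.mem_Ici]
      · simp [hFdef, hs, Set.indicator_of_notMem, Set.mem_Ici]
    show ∫ s, F (s, u) ∂μ = (Real.exp (c * t) - Real.exp (c * u)) * g u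
    rw [hμ]
    rw [show (fun s => F (s, u)) = (Ici u).indicator (fun s => c * Real.exp (c * s) * g u) from e1]
    rw [MeasureTheory.setIntegral_indicator measurableSet_Ici, hIci u hu,
      MeasureTheory.integral_mul_const, expInt hu.2]
  rw [step1, step2, step3]
  have hint1 : Integrable (fun u => Real.exp (c * t) * g u) μ := hgi.const_mul _
  have hint2 : Integrable (fun u => Real.exp (c * u) * g u) μ :=
    mulCont hg (Real.continuous_exp.comp (continuous_const.mul continuous_id))
  have e2 : (fun u => (Real.exp (c * t) - Real.exp (c * u)) * g u)
      = fun u => Real.exp (c * t) * g u - Real.exp (c * u) * g u := by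
    funext u; ring
  rw [e2, MeasureTheory.integral_sub hint1 hint2, MeasureTheory.integral_const_mul]

open MeasureTheory Set Filter in
private lemma gron {f g : ℝ → ℝ} {A B c : ℝ} (hAB : A ≤ B) (hc : 0 ≤ c)
    (hg : IntegrableOn g (Icc A B))
    (hrep : ∀ t ∈ Icc A B, f t = f A + ∫ s in A..t, g s)
    (hf0 : ∀ t ∈ Icc A B, 0 ≤ f t)
    (hae : ∀ᵐ s ∂(volume.restrict (Icc A B)), -(c * f s) ≤ g s) :
    ∀ t ∈ Icc A B, f A * Real.exp (-(c * (t - A))) ≤ f t := by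
  intro t ht
  have hAt : A ≤ t := ht.1
  have hrep' : ∀ s ∈ Icc A B, f s = f A + ∫ u in Icc A s, g u := by
    intro s hs
    rw [hrep s hs, intervalIntegral.integral_of_le hs.1,
      MeasureTheory.integral_Icc_eq_integral_Ioc]
  have hgt : IntegrableOn g (Icc A t) := hg.mono_set (Icc_subset_Icc_right ht.2)
  have hGcont : ContinuousOn (fun s => ∫ u in Icc A s, g u) (Icc A B) :=
    intervalIntegral.continuousOn_primitive_Icc hg
  have hfcont : ContinuousOn f (Icc A B) :=
    (continuousOn_const.add hGcont).congr hrep'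
  have hexpc : Continuous fun s : ℝ => Real.exp (c * s) :=
    Real.continuous_exp.comp (continuous_const.mul continuous_id)
  have hefInt : IntegrableOn (fun s => Real.exp (c * s) * f s) (Icc A t) :=
    (hexpc.continuousOn.mul (hfcont.mono (Icc_subset_Icc_right ht.2))).integrableOn_Icc
  have hegInt : IntegrableOn (fun s => Real.exp (c * s) * g s) (Icc A t) := mulCont hgt hexpc
  have int1 : IntegrableOn (fun s => f A * (c * Real.exp (c * s))) (Icc A t) :=
    (continuous_const.mul (continuous_const.mul
      (Real.continuous_exp.comp (continuous_const.mul continuous_id)))).integrableOn_Icc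
  have int2 : IntegrableOn (fun s => c * Real.exp (c * s) * ∫ u in Icc A s, g u) (Icc A t) := by
    apply ContinuousOn.integrableOn_Icc
    exact ((continuous_const.mul hexpc).continuousOn).mul
      (hGcont.mono (Icc_subset_Icc_right ht.2))
  have e2 : ∫ s in Icc A t, c * (Real.exp (c * s) * f s)
      = ∫ s in Icc A t, (f A * (c * Real.exp (c * s))
          + c * Real.exp (c * s) * ∫ u in Icc A s, g u) := by
    apply MeasureTheory.setIntegral_congr_fun measurableSet_Icc
    intro s hs
    show c * (Real.exp (c * s) * f s)
      = f A * (c * Real.exp (c * s)) + c * Real.exp (c * s) * ∫ u in Icc A s, g u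
    rw [hrep' s ⟨hs.1, hs.2.trans ht.2⟩]
    ring
  have I1 : ∫ s in Icc A t, f A * (c * Real.exp (c * s))
      = f A * (Real.exp (c * t) - Real.exp (c * A)) := by
    rw [MeasureTheory.integral_const_mul, expInt hAt]
  have I2 : ∫ s in Icc A t, c * Real.exp (c * s) * ∫ u in Icc A s, g u
      = Real.exp (c * t) * (∫ u in Icc A t, g u) - ∫ u in Icc A t, Real.exp (c * u) * g u :=
    fubStep hAt hgt
  have key : ∫ s in Icc A t, (Real.exp (c * s) * g s + c * (Real.exp (c * s) * f s))
      = Real.exp (c * t) * f t - Real.exp (c * A) * f A := by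
    rw [MeasureTheory.integral_add hegInt (hefInt.const_mul c), e2,
      MeasureTheory.integral_add int1 int2, I1, I2, hrep' t ⟨hAt, ht.2⟩]
    have : ∫ s in Icc A t, Real.exp (c * s) * g s = ∫ u in Icc A t, Real.exp (c * u) * g u := rfl
    rw [this]
    ring
  have pos : 0 ≤ ∫ s in Icc A t, (Real.exp (c * s) * g s + c * (Real.exp (c * s) * f s)) := by
    apply MeasureTheory.integral_nonneg_of_ae
    have h1 : ∀ᵐ s ∂volume.restrict (Icc A t), -(c * f s) ≤ g s :=
      MeasureTheory.ae_restrict_of_ae_restrict_of_subset (Icc_subset_Icc_right ht.2) hae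
    filter_upwards [h1, MeasureTheory.ae_restrict_mem measurableSet_Icc] with s hs hmem
    have hf0s : 0 ≤ f s := hf0 s ⟨hmem.1, hmem.2.trans ht.2⟩
    have h2 : 0 ≤ Real.exp (c * s) * (g s + c * f s) :=
      mul_nonneg (Real.exp_pos _).le (by linarith)
    have h3 : Real.exp (c * s) * (g s + c * f s)
        = Real.exp (c * s) * g s + c * (Real.exp (c * s) * f s) := by ring
    show (0:ℝ) ≤ Real.exp (c * s) * g s + c * (Real.exp (c * s) * f s)
    linarith
  have h1 : Real.exp (c * A) * f A ≤ Real.exp (c * t) * f t := by linarith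
  have h3 : (0:ℝ) < Real.exp (c * t) := Real.exp_pos _
  have h4 : f A * Real.exp (-(c * (t - A))) = Real.exp (c * A) * f A / Real.exp (c * t) := by
    rw [eq_div_iff (ne_of_gt h3), mul_assoc, ← Real.exp_add]
    rw [show -(c * (t - A)) + c * t = c * A by ring]
    ring
  rw [h4, div_le_iff₀ h3]
  linarith [mul_comm (f t) (Real.exp (c * t))]

theorem stmt3 (n : ℕ) (hn : 1 ≤ n) (abar hbar : ℝ) (habar : 0 ≤ abar) (hhbar : 0 ≤ hbar)
    (a h : Fin n → Fin n → ℝ → ℝ)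
    (ha : GoodWeights n abar a) (hh : GoodDelays n hbar h)
    (ξ : ℝ) (hξ : 0 ≤ ξ)
    (x D : ℝ → Fin n → ℝ) (hx : IsSolEq n a h hbar ξ x D)
    (hinit : ∀ i, x ξ i = 1)
    (hpast : ∀ s ∈ Ico (ξ - hbar) ξ, ∀ i, x s i = 0) :
    ∀ i : Fin n, ∀ t : ℝ, ξ ≤ t →
      Real.exp (-(((n : ℝ) - 1) * abar * hbar)) ≤ x t i := by
  obtain ⟨hbd, hDint, hrepx, haeD⟩ := hx
  obtain ⟨hameas, habd, hadiag⟩ := ha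
  obtain ⟨hhmeas, hhbd, hhdiag⟩ := hh
  set c : ℝ := ((n : ℝ) - 1) * abar with hcdef
  have hn1 : (1:ℝ) ≤ (n:ℝ) := by exact_mod_cast hn
  have hc : 0 ≤ c := mul_nonneg (by linarith) habar
  set ψ : ℝ := Real.exp (-(c * hbar)) with hψdef
  have hψpos : 0 < ψ := Real.exp_pos _
  have hψ1 : ψ ≤ 1 := by
    rw [hψdef, ← Real.exp_zero]
    exact Real.exp_le_exp.mpr (by nlinarith)
  -- row sums are bounded by c
  have hsum : ∀ (i : Fin n) (s : ℝ), 0 ≤ s → ∑ j, a i j s ≤ c := by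
    intro i s hs
    have h1 : ∑ j, a i j s ≤ ∑ j : Fin n, (if j = i then 0 else abar) := by
      apply Finset.sum_le_sum
      intro j _
      by_cases hji : j = i
      · simp [hji, hadiag i s hs]
      · simp only [hji, if_false]
        exact (habd i j s hs).2
    have h2 : ∑ j : Fin n, (if j = i then (0:ℝ) else abar)
        = (∑ _j : Fin n, abar) - ∑ j : Fin n, (if j = i then abar else 0) := by
      rw [← Finset.sum_sub_distrib]
      apply Finset.sum_congr rfl
      intro j _
      by_cases hji : j = i <;> simp [hji]
    have h3 : ∑ j : Fin n, (if j = i then abar else 0) = abar := by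
      rw [Finset.sum_ite_eq' Finset.univ i fun _ => abar]
      simp
    have h4 : (∑ _j : Fin n, abar) = (n:ℝ) * abar := by
      rw [Finset.sum_const, Finset.card_univ, Fintype.card_fin]
      simp [nsmul_eq_mul]
    rw [h2, h3, h4] at h1
    rw [hcdef]
    linarith
  -- continuity of x on [ξ, T]
  have hcontT : ∀ (i : Fin n) (T : ℝ), ContinuousOn (fun s => x s i) (Icc ξ T) := by
    intro i T
    rcases le_or_gt ξ T with hξT | hξT
    · have hint : IntegrableOn (fun s => D s i) (uIcc ξ T) := by
        rw [uIcc_of_le hξT]; exact hDint i T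
      have hcp := intervalIntegral.continuousOn_primitive_interval hint
      rw [uIcc_of_le hξT] at hcp
      exact (continuousOn_const.add hcp).congr fun s hs => hrepx i s hs.1
    · rw [Icc_eq_empty (not_le.mpr hξT)]
      exact continuousOn_empty _
  have hCW : ∀ (i : Fin n) (σ : ℝ), ξ ≤ σ → ContinuousWithinAt (fun s => x s i) (Ici ξ) σ := by
    intro i σ hσ
    have h1 : ContinuousWithinAt (fun s => x s i) (Icc ξ (σ + 1)) σ :=
      (hcontT i (σ + 1)) σ ⟨hσ, by linarith⟩
    apply h1.mono_of_mem_nhdsWithin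
    apply mem_nhdsWithin.mpr
    refine ⟨Iio (σ + 1), isOpen_Iio, by simp, ?_⟩
    rintro y ⟨hy1, hy2⟩
    exact ⟨hy2, le_of_lt hy1⟩
  -- main claim
  have main : ∀ r : ℝ, 0 < r → r < ψ → ∀ s, ξ ≤ s → ∀ i, r ≤ x s i := by
    intro r hr0 hrψ
    by_contra hbad
    push_neg at hbad
    obtain ⟨s0, hs0ξ, i0', hs0⟩ := hbad
    set Bad : Set ℝ := {s | ξ ≤ s ∧ ∃ j, x s j < r} with hBadDef
    have hne : Bad.Nonempty := ⟨s0, hs0ξ, i0', hs0⟩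
    have hbdd : BddBelow Bad := ⟨ξ, fun s hs => hs.1⟩
    set τ := sInf Bad with hτdef
    have hτξ : ξ ≤ τ := le_csInf hne fun s hs => hs.1
    have h_below : ∀ s, ξ ≤ s → s < τ → ∀ j, r ≤ x s j := by
      intro s hsξ hsτ j
      by_contra hlt
      push_neg at hlt
      exact absurd (csInf_le hbdd ⟨hsξ, j, hlt⟩) (not_le.mpr hsτ)
    have h_at : ∀ j, r ≤ x τ j := by
      intro j
      by_contra hlt
      push_neg at hlt
      rcases eq_or_lt_of_le hτξ with heq | hgt
      · rw [← heq, hinit j] at hlt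
        linarith
      · have h4 : Filter.Tendsto (fun s => x s j) (nhds τ) (nhds (x τ j)) := by
          have h3 : nhdsWithin τ (Ici ξ) = nhds τ := nhdsWithin_eq_nhds.mpr (Ici_mem_nhds hgt)
          have h2 := hCW j τ hτξ
          rwa [ContinuousWithinAt, h3] at h2
        have hev : ∀ᶠ y in nhds τ, x y j < r := h4.eventually_lt_const hlt
        rw [Metric.eventually_nhds_iff] at hev
        obtain ⟨ε, hε, hball⟩ := hev
        set s1 := max ξ (τ - ε / 2) with hs1def
        have hs1τ : s1 < τ := max_lt hgt (by linarith)
        have hs1ξ : ξ ≤ s1 := le_max_left _ _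
        have hs1ε : τ - s1 < ε := by
          have := le_max_right ξ (τ - ε / 2)
          simp only [← hs1def] at this
          linarith
        have hxlt : x s1 j < r := by
          apply hball
          rw [Real.dist_eq, abs_of_nonpos (by linarith)]
          linarith
        exact absurd hxlt (not_lt.mpr (h_below s1 hs1ξ hs1τ j))
    have h_le : ∀ (j : Fin n) (s : ℝ), ξ ≤ s → s ≤ τ → r ≤ x s j := by
      intro j s h1 h2
      rcases lt_or_eq_of_le h2 with hlt | heq
      · exact h_below s h1 hlt j
      · rw [heq]; exact h_at j
    have h_cross : ∃ j, x τ j = r := by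
      by_contra hno
      push_neg at hno
      have hgt' : ∀ j, r < x τ j := fun j => lt_of_le_of_ne (h_at j) (Ne.symm (hno j))
      have hev : ∀ᶠ y in nhdsWithin τ (Ici ξ), ∀ j, r < x y j := by
        rw [eventually_all]
        intro j
        exact (hCW j τ hτξ).eventually_const_lt (hgt' j)
      rw [eventually_nhdsWithin_iff, Metric.eventually_nhds_iff] at hev
      obtain ⟨ε, hε, hball⟩ := hev
      obtain ⟨b, hbBad, hbτ⟩ := (csInf_lt_iff hbdd hne).mp
        (show sInf Bad < τ + ε by rw [← hτdef]; linarith)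
      have hτb : τ ≤ b := csInf_le hbdd hbBad
      have hallb : ∀ j, r < x b j := by
        apply hball
        · rw [Real.dist_eq, abs_of_nonneg (by linarith)]
          linarith
        · exact hbBad.1
      obtain ⟨j, hj⟩ := hbBad.2
      exact absurd (hallb j) (not_lt.mpr hj.le)
    obtain ⟨i0, hi0⟩ := h_cross
    -- key a.e. inequality
    have haeKey : ∀ (i : Fin n) (Aa Bb ρ : ℝ), ξ ≤ Aa →
        (∀ (j : Fin n) (s : ℝ), s ∈ Icc Aa Bb → ρ ≤ x (s - h i j s) j) →
        (∀ s ∈ Icc Aa Bb, ρ ≤ x s i) →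
        ∀ᵐ s ∂(volume.restrict (Icc Aa Bb)), -(c * (x s i - ρ)) ≤ D s i := by
      intro i Aa Bb ρ hA hdel hxρ
      filter_upwards [MeasureTheory.ae_restrict_of_ae haeD,
        MeasureTheory.ae_restrict_mem measurableSet_Icc] with s hsD hmem
      have hsξ : ξ ≤ s := hA.trans hmem.1
      have hs0 : (0:ℝ) ≤ s := hξ.trans hsξ
      rw [hsD hsξ i]
      have hterm : ∀ j : Fin n, -(a i j s * (x s i - ρ)) ≤ a i j s * (x (s - h i j s) j - x s i) := by
        intro j
        have ha0 : 0 ≤ a i j s := (habd i j s hs0).1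
        have hX : ρ ≤ x (s - h i j s) j := hdel j s hmem
        nlinarith [mul_nonneg ha0 (by linarith : (0:ℝ) ≤ x (s - h i j s) j - ρ)]
      calc -(c * (x s i - ρ)) ≤ -((∑ j, a i j s) * (x s i - ρ)) := by
            have h1 : ∑ j, a i j s ≤ c := hsum i s hs0
            have h2 : 0 ≤ x s i - ρ := sub_nonneg.mpr (hxρ s hmem)
            nlinarith
        _ = ∑ j, -(a i j s * (x s i - ρ)) := by
            rw [Finset.sum_mul, ← Finset.sum_neg_distrib]
        _ ≤ ∑ j, a i j s * (x (s - h i j s) j - x s i) :=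
            Finset.sum_le_sum fun j _ => hterm j
    -- Step A : exponential bound on [ξ, min τ (ξ+hbar)]
    set B1 := min τ (ξ + hbar) with hB1def
    have hξB1 : ξ ≤ B1 := le_min hτξ (by linarith)
    have hB1τ : B1 ≤ τ := min_le_left _ _
    have hdel0 : ∀ (j : Fin n) (s : ℝ), s ∈ Icc ξ B1 → (0:ℝ) ≤ x (s - h i0 j s) j := by
      intro j s hmem
      have hs0 : (0:ℝ) ≤ s := hξ.trans hmem.1
      obtain ⟨hh0, hhb⟩ := hhbd i0 j s hs0
      rcases lt_or_ge (s - h i0 j s) ξ with hd | hd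
      · exact le_of_eq (hpast _ ⟨by linarith [hmem.1], hd⟩ j).symm
      · have hr2 : r ≤ x (s - h i0 j s) j :=
          h_le j _ hd (by linarith [hmem.2, hB1τ])
        linarith
    have hx00 : ∀ s ∈ Icc ξ B1, (0:ℝ) ≤ x s i0 := by
      intro s hs
      have := h_le i0 s hs.1 (hs.2.trans hB1τ)
      linarith
    have haeA : ∀ᵐ s ∂(volume.restrict (Icc ξ B1)), -(c * x s i0) ≤ D s i0 := by
      have := haeKey i0 ξ B1 0 le_rfl hdel0 hx00
      exact this.mono fun s hs => by simpa using hs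
    have gA := gron (f := fun s => x s i0) (g := fun s => D s i0) hξB1 hc (hDint i0 B1)
      (fun t ht' => hrepx i0 t ht'.1) hx00 haeA
    rcases le_or_gt τ (ξ + hbar) with hcase | hcase
    · -- first crossing happens before ξ + hbar
      have hB1eq : B1 = τ := min_eq_left hcase
      have h1 : x ξ i0 * Real.exp (-(c * (τ - ξ))) ≤ x τ i0 :=
        gA τ ⟨hτξ, by rw [hB1eq]⟩
      rw [hinit i0, one_mul, hi0] at h1
      have h2 : ψ ≤ Real.exp (-(c * (τ - ξ))) := by
        rw [hψdef]
        exact Real.exp_le_exp.mpr (by nlinarith)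
      linarith
    · -- first crossing happens after ξ + hbar
      have hB1eq : B1 = ξ + hbar := min_eq_right hcase.le
      have hstart : ψ ≤ x (ξ + hbar) i0 := by
        have h1 : x ξ i0 * Real.exp (-(c * (ξ + hbar - ξ))) ≤ x (ξ + hbar) i0 :=
          gA (ξ + hbar) ⟨by linarith, by rw [hB1eq]⟩
        rw [hinit i0, one_mul, show ξ + hbar - ξ = hbar by ring] at h1
        rw [hψdef]
        exact h1
      set A2 := ξ + hbar with hA2def
      have hξA2 : ξ ≤ A2 := by rw [hA2def]; linarith
      have hA2τ : A2 ≤ τ := hcase.le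
      have hgean : IntegrableOn (fun s => D s i0) (Icc A2 τ) :=
        (hDint i0 τ).mono_set (Icc_subset_Icc_left hξA2)
      have hrep2 : ∀ t ∈ Icc A2 τ, x t i0 - r = (x A2 i0 - r) + ∫ s in A2..t, D s i0 := by
        intro t ht'
        have hξt : ξ ≤ t := hξA2.trans ht'.1
        have e1 := hrepx i0 t hξt
        have e2 := hrepx i0 A2 hξA2
        have i1 : IntervalIntegrable (fun s => D s i0) volume ξ t := by
          rw [intervalIntegrable_iff_integrableOn_Ioc_of_le hξt]
          exact (hDint i0 t).mono_set Ioc_subset_Icc_self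
        have i2 : IntervalIntegrable (fun s => D s i0) volume ξ A2 := by
          rw [intervalIntegrable_iff_integrableOn_Ioc_of_le hξA2]
          exact (hDint i0 A2).mono_set Ioc_subset_Icc_self
        have e3 := intervalIntegral.integral_interval_sub_left i1 i2
        linarith [e1, e2, e3]
      have hf02 : ∀ t ∈ Icc A2 τ, (0:ℝ) ≤ x t i0 - r := fun t ht' =>
        sub_nonneg.mpr (h_le i0 t (hξA2.trans ht'.1) ht'.2)
      have hdel2 : ∀ (j : Fin n) (s : ℝ), s ∈ Icc A2 τ → r ≤ x (s - h i0 j s) j := by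
        intro j s hmem
        have hs0 : (0:ℝ) ≤ s := hξ.trans (hξA2.trans hmem.1)
        obtain ⟨hh0, hhb⟩ := hhbd i0 j s hs0
        have hmem1 : A2 ≤ s := hmem.1
        rw [hA2def] at hmem1
        exact h_le j _ (by linarith) (by linarith [hmem.2])
      have hae2 : ∀ᵐ s ∂(volume.restrict (Icc A2 τ)), -(c * (x s i0 - r)) ≤ D s i0 :=
        haeKey i0 A2 τ r hξA2 hdel2 (fun s hs => h_le i0 s (hξA2.trans hs.1) hs.2)
      have gB := gron (f := fun s => x s i0 - r) (g := fun s => D s i0) hA2τ hc hgean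
        hrep2 hf02 hae2
      have hfinal : (x A2 i0 - r) * Real.exp (-(c * (τ - A2))) ≤ x τ i0 - r :=
        gB τ ⟨hA2τ, le_rfl⟩
      rw [hi0] at hfinal
      have hpos : 0 < (ψ - r) * Real.exp (-(c * (τ - A2))) :=
        mul_pos (by linarith) (Real.exp_pos _)
      have hmono : (ψ - r) * Real.exp (-(c * (τ - A2)))
          ≤ (x A2 i0 - r) * Real.exp (-(c * (τ - A2))) :=
        mul_le_mul_of_nonneg_right (by linarith) (Real.exp_pos _).le
      linarith
  -- conclude
  intro i t ht
  by_contra hxt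
  push_neg at hxt
  have hmax0 : (0:ℝ) ≤ max (x t i) 0 := le_max_right _ _
  have hmaxψ : max (x t i) 0 < ψ := max_lt hxt hψpos
  set r := (max (x t i) 0 + ψ) / 2 with hrdef
  have h1 : 0 < r := by rw [hrdef]; linarith
  have h2 : r < ψ := by rw [hrdef]; linarith
  have h3 := main r h1 h2 t ht i
  have h4 : x t i ≤ max (x t i) 0 := le_max_left _ _
  have h5 : max (x t i) 0 < r := by rw [hrdef]; linarith
  linarith
end

section
/- Suppose the weight matrix A(·) is repeatedly strongly connected with sequence (t_p) and constant ε > 0, and M := sup over i,j and p of ∫_{t_p}^{t_{p+1}} a_{ij}(t) dt is finite. Then every solution x of the delayed consensus inequality on [t₀,∞) exhibits eventual consensus: there exists c* ∈ [−∞, +∞) such that lim_{t→∞} x_i(t) = c* for every i ∈ [1:n]. -/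
open MeasureTheory Set Filter intervalIntegral

open MeasureTheory Set Filter intervalIntegral
set_option maxHeartbeats 1000000

/-- Bounded a.e.-measurable-on-compact functions are integrable. -/
lemma bddIntegrableOn {f : ℝ → ℝ} {α β C : ℝ}
    (hm : AEStronglyMeasurable f (volume.restrict (Icc α β)))
    (hb : ∀ t ∈ Icc α β, |f t| ≤ C) : IntegrableOn f (Icc α β) := by
  refine Integrable.mono' (integrable_const C) hm ?_
  exact (ae_restrict_iff' measurableSet_Icc).2 (Filter.Eventually.of_forall (fun t ht => by
    simpa [Real.norm_eq_abs] using hb t ht))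

/-- Core crossing lemma: a quantitative no-collapse estimate replacing Grönwall. -/
lemma core_cross (α β : ℝ) (hab : α ≤ β) (w v g : ℝ → ℝ)
    (hw : ContinuousOn w (Icc α β))
    (hv0 : ∀ t ∈ Icc α β, 0 ≤ v t)
    (hvw : ∀ t ∈ Icc α β, v t ≤ w t)
    (hg0 : ∀ t ∈ Icc α β, 0 ≤ g t)
    (hgi : IntegrableOn g (Icc α β))
    (hgv : IntegrableOn (fun r => g r * v r) (Icc α β))
    (hineq : ∀ s t, α ≤ s → s ≤ t → t ≤ β → w s - ∫ r in s..t, g r * v r ≤ w t)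
    (hmass : (∫ r in α..β, g r) ≤ 1/4) :
    w α / 2 ≤ w β := by
  have hwnn : ∀ t ∈ Icc α β, 0 ≤ w t := fun t ht => (hv0 t ht).trans (hvw t ht)
  rcases le_or_gt (w α) 0 with hc | hc
  · have := hwnn β ⟨hab, le_rfl⟩
    linarith
  by_contra hcon
  push_neg at hcon
  -- first time w drops to w α / 2
  set S : Set ℝ := Icc α β ∩ w ⁻¹' (Iic (w α / 2)) with hS
  have hSclosed : IsClosed S := hw.preimage_isClosed_of_isClosed isClosed_Icc isClosed_Iic
  have hSne : S.Nonempty := ⟨β, ⟨hab, le_rfl⟩, le_of_lt hcon⟩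
  have hSbdd : BddBelow S := ⟨α, fun t ht => ht.1.1⟩
  set τ := sInf S with hτ
  have hτS : τ ∈ S := hSclosed.csInf_mem hSne hSbdd
  have hτIcc : τ ∈ Icc α β := hτS.1
  have hτw : w τ ≤ w α / 2 := hτS.2
  have hbefore : ∀ t, α ≤ t → t < τ → w α / 2 < w t := by
    intro t h1 h2
    by_contra hle
    push_neg at hle
    exact absurd (csInf_le hSbdd ⟨⟨h1, h2.le.trans hτIcc.2⟩, hle⟩) (not_le.2 h2)
  -- last time before τ with w ≥ w α
  set S2 : Set ℝ := Icc α τ ∩ w ⁻¹' (Ici (w α)) with hS2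
  have hwτ : ContinuousOn w (Icc α τ) := hw.mono (Icc_subset_Icc le_rfl hτIcc.2)
  have hS2closed : IsClosed S2 := hwτ.preimage_isClosed_of_isClosed isClosed_Icc isClosed_Ici
  have hS2ne : S2.Nonempty := ⟨α, ⟨le_rfl, hτIcc.1⟩, mem_preimage.2 (mem_Ici.2 le_rfl)⟩
  have hS2bdd : BddAbove S2 := ⟨τ, fun t ht => ht.1.2⟩
  set σ := sSup S2 with hσ
  have hσS2 : σ ∈ S2 := hS2closed.csSup_mem hS2ne hS2bdd
  have hστ : σ ≤ τ := hσS2.1.2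
  have hσα : α ≤ σ := hσS2.1.1
  have hσw : w α ≤ w σ := hσS2.2
  have hafter : ∀ t, σ < t → t ≤ τ → w t < w α := by
    intro t h1 h2
    by_contra hle
    push_neg at hle
    exact absurd (le_csSup hS2bdd ⟨⟨hσα.trans h1.le, h2⟩, hle⟩) (not_le.2 h1)
  have hτβ : τ ≤ β := hτIcc.2
  -- integral estimate on [σ, τ]
  have hsub : Icc σ τ ⊆ Icc α β := Icc_subset_Icc hσα hτβ
  have hgi' : IntervalIntegrable g volume σ τ :=
    (intervalIntegrable_iff_integrableOn_Icc_of_le hστ).2 (hgi.mono_set hsub)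
  have hgvi' : IntervalIntegrable (fun r => g r * v r) volume σ τ :=
    (intervalIntegrable_iff_integrableOn_Icc_of_le hστ).2 (hgv.mono_set hsub)
  have hgc : IntervalIntegrable (fun r => g r * w α) volume σ τ :=
    (hgi'.mul_const _)
  have hestim : (∫ r in σ..τ, g r * v r) ≤ ∫ r in σ..τ, g r * w α := by
    rw [integral_of_le hστ, integral_of_le hστ]
    refine setIntegral_mono_on hgvi'.1 hgc.1 measurableSet_Ioc ?_
    intro t ht
    have htIcc : t ∈ Icc α β := hsub ⟨ht.1.le, ht.2⟩
    have hvt : v t ≤ w α := by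
      rcases lt_or_eq_of_le ht.2 with h | h
      · exact (hvw t htIcc).trans (hafter t ht.1 h.le).le
      · refine (hvw t htIcc).trans ?_
        rw [h]
        linarith
    exact mul_le_mul_of_nonneg_left hvt (hg0 t htIcc)
  have hgmass : (∫ r in σ..τ, g r) ≤ 1/4 := by
    refine le_trans ?_ hmass
    refine integral_mono_interval hσα hστ hτβ ?_ ((intervalIntegrable_iff_integrableOn_Icc_of_le hab).2 hgi)
    refine (ae_restrict_iff' measurableSet_Ioc).2 (Filter.Eventually.of_forall ?_)
    intro t ht
    exact hg0 t ⟨ht.1.le, ht.2⟩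
  have h2 : (∫ r in σ..τ, g r * w α) = (∫ r in σ..τ, g r) * w α := by
    rw [intervalIntegral.integral_mul_const]
  have key : w σ - (∫ r in σ..τ, g r * v r) ≤ w τ := hineq σ τ hσα hστ hτβ
  have : (∫ r in σ..τ, g r * v r) ≤ w α / 4 := by
    calc (∫ r in σ..τ, g r * v r) ≤ (∫ r in σ..τ, g r) * w α := by rw [← h2]; exact hestim
    _ ≤ 1/4 * w α := by
        apply mul_le_mul_of_nonneg_right hgmass hc.le
    _ = w α / 4 := by ring
  linarith


/-- Iterated decay: `w` loses at most a factor `2^k` over a stretch of mass `k/4`. -/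
lemma decay_lemma (α : ℝ) (w v g : ℝ → ℝ) (k : ℕ) :
    ∀ β, α ≤ β →
    ContinuousOn w (Icc α β) →
    (∀ t ∈ Icc α β, 0 ≤ v t) →
    (∀ t ∈ Icc α β, v t ≤ w t) →
    (∀ t ∈ Icc α β, 0 ≤ g t) →
    IntegrableOn g (Icc α β) →
    IntegrableOn (fun r => g r * v r) (Icc α β) →
    (∀ s t, α ≤ s → s ≤ t → t ≤ β → w s - ∫ r in s..t, g r * v r ≤ w t) →
    (∫ r in α..β, g r) ≤ k/4 →
    w α / 2^k ≤ w β := by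
  induction k with
  | zero =>
    intro β hab hw hv0 hvw hg0 hgi hgv hineq hmass
    -- mass is 0, so ∫ g v = 0 on subintervals
    have hg0' : 0 ≤ᵐ[volume.restrict (Icc α β)] g :=
      (ae_restrict_iff' measurableSet_Icc).2 (Filter.Eventually.of_forall hg0)
    have hmass0 : (∫ r in α..β, g r) = 0 := by
      have h1 : 0 ≤ ∫ r in α..β, g r := by
        rw [integral_of_le hab]
        exact setIntegral_nonneg measurableSet_Ioc (fun t ht => hg0 t ⟨ht.1.le, ht.2⟩)
      have h2 : (∫ r in α..β, g r) ≤ 0 := by simpa using hmass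
      linarith
    have hgz : g =ᵐ[volume.restrict (Ioc α β)] 0 := by
      have hg0'' : 0 ≤ᵐ[volume.restrict (Ioc α β)] g :=
        (ae_restrict_iff' measurableSet_Ioc).2 (Filter.Eventually.of_forall
          (fun t ht => hg0 t ⟨ht.1.le, ht.2⟩))
      have hgint : IntervalIntegrable g volume α β :=
        (intervalIntegrable_iff_integrableOn_Icc_of_le hab).2 hgi
      exact (intervalIntegral.integral_eq_zero_iff_of_le_of_nonneg_ae hab hg0'' hgint).1 hmass0
    have hgvz : (∫ r in α..β, g r * v r) = 0 := by
      rw [integral_of_le hab]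
      have hgz' : ∀ᵐ t ∂volume, t ∈ Ioc α β → g t = 0 :=
        (ae_restrict_iff' measurableSet_Ioc).1 hgz
      have hz' : ∀ᵐ t ∂volume, t ∈ Ioc α β → g t * v t = (0:ℝ) := by
        filter_upwards [hgz'] with t ht hmem
        rw [ht hmem, zero_mul]
      rw [setIntegral_congr_ae (g := fun _ => (0:ℝ)) measurableSet_Ioc hz']
      simp
    have := hineq α β le_rfl hab le_rfl
    rw [hgvz] at this
    simpa using this
  | succ k ih =>
    intro β hab hw hv0 hvw hg0 hgi hgv hineq hmass
    have hwa0 : 0 ≤ w α := (hv0 α ⟨le_rfl, hab⟩).trans (hvw α ⟨le_rfl, hab⟩)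
    have hgint : IntervalIntegrable g volume α β :=
      (intervalIntegrable_iff_integrableOn_Icc_of_le hab).2 hgi
    rcases le_or_gt (∫ r in α..β, g r) (k/4) with hk | hk
    · have := ih β hab hw hv0 hvw hg0 hgi hgv hineq hk
      refine le_trans ?_ this
      have : (0:ℝ) < 2^k := by positivity
      rw [pow_succ]
      rw [div_le_div_iff₀ (by positivity) (by positivity)]
      nlinarith
    · -- split at γ with ∫_α^γ g = k/4
      have hGcont : ContinuousOn (fun t => ∫ r in α..t, g r) (Icc α β) := by
        have := continuousOn_primitive_interval (f := g) (a := α) (b := β) (μ := volume) ?_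
        · rwa [uIcc_of_le hab] at this
        · rwa [uIcc_of_le hab]
      have hG0 : (∫ r in α..α, g r) = 0 := by simp
      have hIVT := intermediate_value_Icc hab hGcont
      have hkmem : (k/4 : ℝ) ∈ Icc (∫ r in α..α, g r) (∫ r in α..β, g r) := by
        constructor
        · rw [hG0]; positivity
        · exact hk.le
      obtain ⟨γ, hγIcc, hγ⟩ := hIVT hkmem
      have hαγ : α ≤ γ := hγIcc.1
      have hγβ : γ ≤ β := hγIcc.2
      have hsub1 : Icc α γ ⊆ Icc α β := Icc_subset_Icc le_rfl hγβ
      have hsub2 : Icc γ β ⊆ Icc α β := Icc_subset_Icc hαγ le_rfl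
      have h1 : w α / 2^k ≤ w γ := by
        refine ih γ hαγ (hw.mono hsub1) (fun t ht => hv0 t (hsub1 ht))
          (fun t ht => hvw t (hsub1 ht)) (fun t ht => hg0 t (hsub1 ht))
          (hgi.mono_set hsub1) (hgv.mono_set hsub1)
          (fun s t h1 h2 h3 => hineq s t h1 h2 (h3.trans hγβ)) (le_of_eq hγ)
      have hadd : (∫ r in α..γ, g r) + (∫ r in γ..β, g r) = ∫ r in α..β, g r := by
        exact integral_add_adjacent_intervals
          (hgint.mono_set (by rw [uIcc_of_le hαγ, uIcc_of_le hab]; exact hsub1))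
          (hgint.mono_set (by rw [uIcc_of_le hγβ, uIcc_of_le hab]; exact hsub2))
      have h2 : (∫ r in γ..β, g r) ≤ 1/4 := by
        have : (k:ℝ)/4 + (∫ r in γ..β, g r) ≤ (k+1)/4 := by
          rw [← hγ] at *
          rw [hadd]
          simpa [Nat.cast_succ] using hmass
        linarith
      have h3 : w γ / 2 ≤ w β := by
        refine core_cross γ β hγβ w v g (hw.mono hsub2) (fun t ht => hv0 t (hsub2 ht))
          (fun t ht => hvw t (hsub2 ht)) (fun t ht => hg0 t (hsub2 ht))
          (hgi.mono_set hsub2) (hgv.mono_set hsub2)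
          (fun s t hs hst htb => hineq s t (hαγ.trans hs) hst htb) h2
      calc w α / 2^(k+1) = (w α / 2^k) / 2 := by rw [pow_succ]; ring
      _ ≤ w γ / 2 := by linarith
      _ ≤ w β := h3

/-- A reflexive-transitive chain entering the complement of `S` must cross the boundary. -/
lemma rtg_cross {γ : Type*} (r : γ → γ → Prop) (S : Finset γ) {u v : γ}
    (hrtg : Relation.ReflTransGen r u v) (hu : u ∈ S) (hv : v ∉ S) :
    ∃ p ∈ S, ∃ q, q ∉ S ∧ r p q := by
  revert hv
  induction hrtg with
  | refl => intro hv; exact absurd hu hv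
  | @tail b c' hab hbc ih =>
    intro hv
    by_cases hb : b ∈ S
    · exact ⟨b, hb, c', hv, hbc⟩
    · exact ih hb

open MeasureTheory Set Filter intervalIntegral in
theorem stmt6 (n : ℕ) (hn : 1 ≤ n) (abar hbar : ℝ) (habar : 0 ≤ abar) (hhbar : 0 ≤ hbar)
    (a h : Fin n → Fin n → ℝ → ℝ)
    (ha : GoodWeights n abar a) (hh : GoodDelays n hbar h)
    (tp : ℕ → ℝ) (ε : ℝ) (hconn : RepeatedlyStronglyConnected n a tp ε)
    (M : ℝ) (hM : MBound n a tp M)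
    (t0 : ℝ) (ht0 : 0 ≤ t0) (x D : ℝ → Fin n → ℝ)
    (hx : IsSolIneq n a h hbar t0 x D) :
    ∃ c : EReal, c ≠ ⊤ ∧
      ∀ i : Fin n, Tendsto (fun t => ((x t i : ℝ) : EReal)) atTop (nhds c) := by

  classical
  obtain ⟨hameas, habnd, hadiag⟩ := ha
  obtain ⟨hhmeas, hhbnd, hhdiag⟩ := hh
  obtain ⟨hLB, hDint, hrep, hDle⟩ := hx
  obtain ⟨htp0, htpmono, htptop, hε, hSC⟩ := hconn
  have hn' : Nonempty (Fin n) := ⟨⟨0, hn⟩⟩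
  -- interval integrability of D
  have hDii : ∀ (i : Fin n) (σ τ : ℝ), t0 ≤ σ → t0 ≤ τ →
      IntervalIntegrable (fun s => D s i) volume σ τ := by
    intro i σ τ h1 h2
    rcases le_total σ τ with hc | hc
    · exact (intervalIntegrable_iff_integrableOn_Icc_of_le hc).2
        ((hDint i τ).mono_set (Icc_subset_Icc h1 le_rfl))
    · exact ((intervalIntegrable_iff_integrableOn_Icc_of_le hc).2
        ((hDint i σ).mono_set (Icc_subset_Icc h2 le_rfl))).symm
  -- continuity of x on [t0, ∞)
  have hxc : ∀ i : Fin n, ContinuousOn (fun t => x t i) (Ici t0) := by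
    intro i
    have hF : ∀ T : ℝ, t0 ≤ T →
        ContinuousOn (fun t => x t0 i + ∫ s in t0..t, D s i) (Icc t0 T) := by
      intro T hT
      have h1 := intervalIntegral.continuousOn_primitive_interval
        (f := fun s => D s i) (a := t0) (b := T) (μ := volume)
        (by rw [uIcc_of_le hT]; exact hDint i T)
      rw [uIcc_of_le hT] at h1
      exact continuousOn_const.add h1
    intro t ht
    have htt : t0 ≤ t := ht
    have h1 : ContinuousWithinAt (fun t => x t0 i + ∫ s in t0..t, D s i) (Icc t0 (t+1)) t :=
      (hF (t+1) (by linarith)) t ⟨htt, by linarith⟩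
    have hmem : Icc t0 (t+1) ∈ nhdsWithin t (Ici t0) := by
      have h2 : Iic (t+1) ∈ nhdsWithin t (Ici t0) :=
        mem_nhdsWithin_of_mem_nhds (Iic_mem_nhds (by linarith))
      have h3 := Filter.inter_mem self_mem_nhdsWithin h2
      simpa [Set.Ici_inter_Iic] using h3
    have h4 : ContinuousWithinAt (fun t => x t0 i + ∫ s in t0..t, D s i) (Ici t0) t :=
      h1.mono_of_mem_nhdsWithin hmem
    exact (h4.congr (fun y hy => hrep i y hy) (hrep i t htt)).mono (subset_refl _)
  -- integral representation of increments
  have hdiff : ∀ (i : Fin n) (σ τ : ℝ), t0 ≤ σ → σ ≤ τ →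
      x τ i - x σ i = ∫ r in σ..τ, D r i := by
    intro i σ τ h1 h2
    have e := intervalIntegral.integral_interval_sub_left
      (hDii i t0 τ le_rfl (h1.trans h2)) (hDii i t0 σ le_rfl h1)
    rw [hrep i τ (h1.trans h2), hrep i σ h1]
    rw [← e]; ring
  -- the row-sum weight
  set g : Fin n → ℝ → ℝ := fun i t => ∑ j, a i j t with hgdef
  have hgmeas : ∀ i, Measurable (g i) := fun i =>
    Finset.measurable_sum Finset.univ (fun j _ => hameas i j)
  have hg0' : ∀ (i : Fin n) (t : ℝ), 0 ≤ t → 0 ≤ g i t := fun i t ht =>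
    Finset.sum_nonneg (fun j _ => (habnd i j t ht).1)
  have hgbd : ∀ (i : Fin n) (t : ℝ), 0 ≤ t → g i t ≤ n * abar := by
    intro i t ht
    calc g i t ≤ ∑ _j : Fin n, abar := Finset.sum_le_sum (fun j _ => (habnd i j t ht).2)
    _ = n * abar := by simp [Finset.sum_const, Finset.card_univ, mul_comm]
  -- integrability of the weights
  have haIcc : ∀ (i j : Fin n) (σ τ : ℝ), 0 ≤ σ → IntegrableOn (a i j) (Icc σ τ) := by
    intro i j σ τ h0
    refine bddIntegrableOn (C := abar) ((hameas i j).aestronglyMeasurable.restrict) ?_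
    intro t ht
    have hb := habnd i j t (h0.trans ht.1)
    rw [abs_le]; exact ⟨by linarith [hb.1], hb.2⟩
  have haII : ∀ (i j : Fin n) (σ τ : ℝ), 0 ≤ σ → σ ≤ τ →
      IntervalIntegrable (a i j) volume σ τ := fun i j σ τ h0 h1 =>
    (intervalIntegrable_iff_integrableOn_Icc_of_le h1).2 (haIcc i j σ τ h0)
  have hgIcc : ∀ (i : Fin n) (σ τ : ℝ), 0 ≤ σ → IntegrableOn (g i) (Icc σ τ) := by
    intro i σ τ h0
    refine bddIntegrableOn (C := n * abar) ((hgmeas i).aestronglyMeasurable.restrict) ?_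
    intro t ht
    have h1 := hg0' i t (h0.trans ht.1)
    have h2 := hgbd i t (h0.trans ht.1)
    have hna : (0:ℝ) ≤ (n:ℝ) * abar := by positivity
    rw [abs_le]; exact ⟨by linarith, h2⟩
  have hgII : ∀ (i : Fin n) (σ τ : ℝ), 0 ≤ σ → σ ≤ τ →
      IntervalIntegrable (g i) volume σ τ := fun i σ τ h0 h1 =>
    (intervalIntegrable_iff_integrableOn_Icc_of_le h1).2 (hgIcc i σ τ h0)
  -- window bounds
  have hwinbdd : ∀ (s T : ℝ) (i : Fin n), t0 ≤ s →
      BddAbove ((fun r => x r i) '' Icc (s - hbar) T) := by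
    intro s T i hs
    obtain ⟨C, hC⟩ := hLB T
    refine ⟨C, ?_⟩
    rintro y ⟨r, hr, rfl⟩
    exact (abs_le.1 (hC i r ⟨by linarith [hr.1], hr.2⟩)).2
  have hwin : ∀ s : ℝ, t0 ≤ s → ∀ (i : Fin n) (r : ℝ), r ∈ Icc (s - hbar) s →
      x r i ≤ Lam n hbar x s := by
    intro s hs i r hr
    have h1 : x r i ≤ sSup ((fun r => x r i) '' Icc (s - hbar) s) :=
      le_csSup (hwinbdd s s i hs) (mem_image_of_mem _ hr)
    have h2 : sSup ((fun r => x r i) '' Icc (s - hbar) s) ≤ Lam n hbar x s :=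
      le_ciSup (f := fun i : Fin n => sSup ((fun r => x r i) '' Icc (s - hbar) s))
        (Set.Finite.bddAbove (Set.finite_range _)) i
    exact h1.trans h2
  -- THE GAIN ESTIMATE
  have hgain : ∀ (i u : Fin n) (c η : ℝ), 0 ≤ η → ∀ (σ τ : ℝ) (k : ℕ), t0 ≤ σ → σ ≤ τ →
      (∀ (j : Fin n) (r : ℝ), r ∈ Icc (σ - hbar) τ → x r j ≤ c) →
      (∀ r ∈ Icc (σ - hbar) τ, x r u ≤ c - η) →
      (∫ r in σ..τ, g i r) ≤ (k : ℝ)/4 →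
      ((c - x σ i) + η * ∫ r in σ..τ, a i u r) / 2^k ≤ c - x τ i := by
    intro i u c η hη σ τ k hσ0 hστ hwinc hlowu hmass
    have hσnn : (0:ℝ) ≤ σ := ht0.trans hσ0
    set v : ℝ → ℝ := fun r => c - x r i with hvdef
    set A : ℝ := ∫ r in σ..τ, a i u r with hAdef
    set P : ℝ → ℝ := fun r => ∫ t in σ..r, a i u t with hPdef
    set w : ℝ → ℝ := fun r => v r + η * (A - P r) with hwdef
    have hPsub : ∀ s t : ℝ, σ ≤ s → s ≤ t → t ≤ τ → P t - P s = ∫ r in s..t, a i u r := by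
      intro s t h1 h2 h3
      exact intervalIntegral.integral_interval_sub_left
        (haII i u σ t hσnn (h1.trans h2)) (haII i u σ s hσnn h1)
    have hArP : ∀ r : ℝ, σ ≤ r → r ≤ τ → A - P r = ∫ t in r..τ, a i u t := by
      intro r h1 h2
      exact intervalIntegral.integral_interval_sub_left
        (haII i u σ τ hσnn hστ) (haII i u σ r hσnn h1)
    have hIcc : Icc σ τ ⊆ Ici t0 := fun r hr => le_trans hσ0 hr.1
    have hvcont : ContinuousOn v (Icc σ τ) := continuousOn_const.sub ((hxc i).mono hIcc)
    have hPcont : ContinuousOn P (Icc σ τ) := by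
      have h1 := intervalIntegral.continuousOn_primitive_interval
        (f := a i u) (a := σ) (b := τ) (μ := volume)
        (by rw [uIcc_of_le hστ]; exact haIcc i u σ τ hσnn)
      rwa [uIcc_of_le hστ] at h1
    have hwcont : ContinuousOn w (Icc σ τ) :=
      hvcont.add (continuousOn_const.mul (continuousOn_const.sub hPcont))
    have hv0 : ∀ r ∈ Icc σ τ, 0 ≤ v r := by
      intro r hr
      have := hwinc i r ⟨by linarith [hr.1], hr.2⟩
      simp only [hvdef]
      linarith
    have hvw : ∀ r ∈ Icc σ τ, v r ≤ w r := by
      intro r hr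
      have h1 : 0 ≤ A - P r := by
        rw [hArP r hr.1 hr.2]
        exact intervalIntegral.integral_nonneg hr.2
          (fun t ht => (habnd i u t (le_trans (hσnn.trans hr.1) ht.1)).1)
      have : 0 ≤ η * (A - P r) := mul_nonneg hη h1
      simp only [hwdef]
      linarith
    have hg0'' : ∀ r ∈ Icc σ τ, 0 ≤ g i r := fun r hr => hg0' i r (hσnn.trans hr.1)
    have hgint' : IntegrableOn (g i) (Icc σ τ) := hgIcc i σ τ hσnn
    have hgv : IntegrableOn (fun r => g i r * v r) (Icc σ τ) := by
      obtain ⟨Cv, hCv⟩ := isCompact_Icc.exists_bound_of_continuousOn hvcont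
      refine bddIntegrableOn (C := (n*abar) * Cv)
        (((hgmeas i).aestronglyMeasurable.restrict).mul
          (hvcont.aestronglyMeasurable measurableSet_Icc)) ?_
      intro t ht
      have hna : (0:ℝ) ≤ (n:ℝ) * abar := by positivity
      have h1 : |g i t| ≤ n * abar := by
        rw [abs_le]
        exact ⟨by linarith [hg0' i t (hσnn.trans ht.1)], hgbd i t (hσnn.trans ht.1)⟩
      have h2 : |v t| ≤ Cv := by simpa [Real.norm_eq_abs] using hCv t ht
      have h3 : (0:ℝ) ≤ Cv := le_trans (abs_nonneg _) h2
      calc |g i t * v t| = |g i t| * |v t| := abs_mul _ _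
      _ ≤ (n*abar) * Cv := mul_le_mul h1 h2 (abs_nonneg _) (by positivity)
    have hpair : ∀ s t : ℝ, σ ≤ s → s ≤ t → t ≤ τ →
        w s - ∫ r in s..t, g i r * v r ≤ w t := by
      intro s t h1 h2 h3
      have hst0 : t0 ≤ s := hσ0.trans h1
      have hs0 : (0:ℝ) ≤ s := ht0.trans hst0
      have hae : ∀ᵐ r ∂volume, r ∈ Icc s t → D r i ≤ g i r * v r - η * a i u r := by
        filter_upwards [hDle] with r hr hmem
        have hrt0 : t0 ≤ r := hst0.trans hmem.1
        have hr0 : (0:ℝ) ≤ r := ht0.trans hrt0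
        have hrineq := hr hrt0 i
        have hsum : (∑ j, a i j r * (x (r - h i j r) j - x r i)) ≤ g i r * v r - η * a i u r := by
          have hdmem : ∀ j : Fin n, r - h i j r ∈ Icc (σ - hbar) τ := by
            intro j
            have hb := hhbnd i j r hr0
            constructor
            · have : σ ≤ r := h1.trans hmem.1
              linarith [hb.2]
            · have : r ≤ τ := hmem.2.trans h3
              linarith [hb.1]
          have e1 : ∀ j : Fin n, a i j r * (x (r - h i j r) j - x r i) ≤
              a i j r * (c - x r i) := by
            intro j
            apply mul_le_mul_of_nonneg_left _ (habnd i j r hr0).1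
            have := hwinc j (r - h i j r) (hdmem j)
            linarith
          have e2 : a i u r * (x (r - h i u r) u - x r i) ≤
              a i u r * (c - x r i) - η * a i u r := by
            have hlo := hlowu (r - h i u r) (hdmem u)
            have h0a := (habnd i u r hr0).1
            nlinarith
          calc (∑ j, a i j r * (x (r - h i j r) j - x r i))
              = (∑ j ∈ Finset.univ.erase u, a i j r * (x (r - h i j r) j - x r i))
                + a i u r * (x (r - h i u r) u - x r i) :=
                (Finset.sum_erase_add _ _ (Finset.mem_univ u)).symm
          _ ≤ (∑ j ∈ Finset.univ.erase u, a i j r * (c - x r i))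
                + (a i u r * (c - x r i) - η * a i u r) :=
                add_le_add (Finset.sum_le_sum (fun j _ => e1 j)) e2
          _ = (∑ j, a i j r * (c - x r i)) - η * a i u r := by
                rw [← Finset.sum_erase_add _ _ (Finset.mem_univ u)]; ring
          _ = g i r * v r - η * a i u r := by
                simp only [hgdef, hvdef, Finset.sum_mul]
        exact hrineq.trans hsum
      have hRHSint : IntervalIntegrable (fun r => g i r * v r - η * a i u r) volume s t := by
        have hx1 : IntegrableOn (fun r => g i r * v r) (Icc s t) :=
          hgv.mono_set (Icc_subset_Icc h1 h3)
        have hx2 : IntegrableOn (fun r => η * a i u r) (Icc s t) :=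
          ((haIcc i u σ τ hσnn).mono_set (Icc_subset_Icc h1 h3)).const_mul η
        exact (intervalIntegrable_iff_integrableOn_Icc_of_le h2).2 (hx1.sub hx2)
      have hDmono : (∫ r in s..t, D r i) ≤ ∫ r in s..t, (g i r * v r - η * a i u r) := by
        refine intervalIntegral.integral_mono_ae_restrict h2 (hDii i s t hst0 (hst0.trans h2)) hRHSint ?_
        exact (ae_restrict_iff' measurableSet_Icc).2 hae
      have hxd := hdiff i s t hst0 h2
      have hsplit : (∫ r in s..t, (g i r * v r - η * a i u r))
          = (∫ r in s..t, g i r * v r) - η * ∫ r in s..t, a i u r := by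
        rw [intervalIntegral.integral_sub
          ((intervalIntegrable_iff_integrableOn_Icc_of_le h2).2 (hgv.mono_set (Icc_subset_Icc h1 h3)))
          (((haII i u s t hs0 h2)).const_mul η)]
        rw [intervalIntegral.integral_const_mul]
      have hPst := hPsub s t h1 h2 h3
      have hkey : x t i ≤ x s i + ((∫ r in s..t, g i r * v r) - η * ∫ r in s..t, a i u r) := by
        rw [hsplit] at hDmono
        linarith
      simp only [hwdef]
      have hvs : v s = c - x s i := rfl
      have hvt : v t = c - x t i := rfl
      have hη2 : η * (P t - P s) = η * ∫ r in s..t, a i u r := by rw [hPst]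
      linarith [hη2, hkey, hvs, hvt]
    have hfin := decay_lemma σ w v (g i) k τ hστ hwcont hv0 hvw hg0'' hgint' hgv hpair
      (by exact hmass)
    have hPσ : P σ = 0 := intervalIntegral.integral_same
    have hPτ : P τ = A := rfl
    have hwσ : w σ = (c - x σ i) + η * A := by simp [hwdef, hvdef, hPσ]
    have hwτ : w τ = c - x τ i := by simp [hwdef, hvdef, hPτ]
    rw [hwσ, hwτ] at hfin
    exact hfin
  -- STEP 1 : no overshoot of the window max
  have hstep1 : ∀ s : ℝ, t0 ≤ s → ∀ T t : ℝ, t ∈ Icc s T → ∀ i : Fin n,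
      x t i ≤ Lam n hbar x s := by
    intro s hs T t htmem i
    rcases le_total T s with hTs | hsT
    · exact hwin s hs i t ⟨by linarith [htmem.1], htmem.2.trans hTs⟩
    · set k : ℕ := ⌈(4:ℝ) * (n * abar * (T - s))⌉₊ with hkdef
      have hne : (Icc s T).Nonempty := nonempty_Icc.2 hsT
      have hmaxes : ∀ j : Fin n, ∃ rj ∈ Icc s T, ∀ r ∈ Icc s T, x r j ≤ x rj j := by
        intro j
        obtain ⟨rj, hrj, hmax⟩ := isCompact_Icc.exists_isMaxOn hne
          ((hxc j).mono (fun r hr => hs.trans hr.1))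
        exact ⟨rj, hrj, fun r hr => hmax hr⟩
      choose rj hrjmem hrjmax using hmaxes
      obtain ⟨istar, _, histar⟩ := Finset.exists_max_image Finset.univ
        (fun j => x (rj j) j) ⟨i, Finset.mem_univ i⟩
      by_cases hcase : x (rj istar) istar ≤ Lam n hbar x s
      · exact le_trans (le_trans (hrjmax i t htmem) (histar i (Finset.mem_univ i))) hcase
      · push_neg at hcase
        exfalso
        set μ : ℝ := x (rj istar) istar with hμdef
        have hwinμ : ∀ (j : Fin n) (r : ℝ), r ∈ Icc (s - hbar) (rj istar) → x r j ≤ μ := by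
          intro j r hr
          rcases le_total r s with hcc | hcc
          · exact le_trans (hwin s hs j r ⟨hr.1, hcc⟩) hcase.le
          · exact le_trans (hrjmax j r ⟨hcc, hr.2.trans (hrjmem istar).2⟩)
              (histar j (Finset.mem_univ j))
        have hmassb : (∫ r in s..rj istar, g istar r) ≤ (k : ℝ)/4 := by
          have h1 : (∫ r in s..rj istar, g istar r) ≤ ∫ _r in s..rj istar, n * abar := by
            refine intervalIntegral.integral_mono_on (hrjmem istar).1
              (hgII istar s (rj istar) (ht0.trans hs) (hrjmem istar).1)
              intervalIntegrable_const ?_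
            intro r hr
            exact hgbd istar r (le_trans (ht0.trans hs) hr.1)
          have h2 : (∫ _r in s..rj istar, (n:ℝ) * abar) = (rj istar - s) * (n * abar) := by
            rw [intervalIntegral.integral_const]; simp [smul_eq_mul]
          have h3 : (rj istar - s) * (n * abar) ≤ n * abar * (T - s) := by
            have h4 : rj istar ≤ T := (hrjmem istar).2
            have h5 : (0:ℝ) ≤ n * abar := by positivity
            nlinarith [(hrjmem istar).1]
          have h6 : (4:ℝ) * (n * abar * (T - s)) ≤ (k:ℝ) := Nat.le_ceil _
          linarith
        have hg1 := hgain istar istar μ 0 le_rfl s (rj istar) k hs (hrjmem istar).1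
          hwinμ (fun r hr => by simpa using hwinμ istar r hr) hmassb
        have h1 : x s istar ≤ Lam n hbar x s := hwin s hs istar s ⟨by linarith, le_rfl⟩
        have hpow : (0:ℝ) < 2^k := by positivity
        have h2 : μ - x (rj istar) istar = 0 := by rw [hμdef]; ring
        rw [h2] at hg1
        have h3 : (μ - x s istar) + 0 * (∫ r in s..rj istar, a istar istar r) ≤ 0 * 2^k :=
          (div_le_iff₀ hpow).1 hg1
        simp only [zero_mul, add_zero] at h3
        linarith
  -- full bound after s
  have hbound : ∀ s : ℝ, t0 ≤ s → ∀ (j : Fin n) (r : ℝ), s - hbar ≤ r →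
      x r j ≤ Lam n hbar x s := by
    intro s hs j r hr
    rcases le_total r s with hc | hc
    · exact hwin s hs j r ⟨hr, hc⟩
    · exact hstep1 s hs r r ⟨hc, le_rfl⟩ j
  -- Lam is antitone
  have hLmono : ∀ s t : ℝ, t0 ≤ s → s ≤ t → Lam n hbar x t ≤ Lam n hbar x s := by
    intro s t hs hst
    rw [show Lam n hbar x t = ⨆ i : Fin n, sSup ((fun s => x s i) '' Icc (t - hbar) t) from rfl]
    refine ciSup_le (fun j => ?_)
    refine csSup_le ((nonempty_Icc.2 (by linarith)).image _) ?_
    rintro y ⟨r, hr, rfl⟩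
    exact hbound s hs j r (by linarith [hr.1])
    -- split on whether the window max is bounded below
  by_cases hbb : BddBelow (Set.range (fun t => Lam n hbar x (max t t0)))
  case neg =>
    -- Λ ↓ -∞ : everything tends to ⊥
    refine ⟨⊥, bot_ne_top, fun i => ?_⟩
    rw [EReal.tendsto_nhds_bot_iff_real]
    intro N
    have hex : ∃ t1 : ℝ, Lam n hbar x (max t1 t0) < N := by
      by_contra hcon
      push_neg at hcon
      exact hbb ⟨N, by rintro y ⟨t1, rfl⟩; exact hcon t1⟩
    obtain ⟨t1, ht1⟩ := hex
    filter_upwards [eventually_ge_atTop (max t1 t0)] with t ht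
    have h1 : t0 ≤ t := le_trans (le_max_right _ _) ht
    have h2 : x t i ≤ Lam n hbar x t := hwin t h1 i t ⟨by linarith, le_rfl⟩
    have h3 : Lam n hbar x t ≤ Lam n hbar x (max t1 t0) :=
      hLmono _ _ (le_max_right _ _) ht
    have h4 : x t i < N := lt_of_le_of_lt (h2.trans h3) ht1
    exact_mod_cast h4
  case pos =>
  have hfant : Antitone (fun t => Lam n hbar x (max t t0)) := by
    intro t1 t2 h12
    exact hLmono _ _ (le_max_right _ _) (max_le_max h12 le_rfl)
  set c0 : ℝ := ⨅ t : ℝ, Lam n hbar x (max t t0) with hc0def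
  have htendsto : Tendsto (fun t => Lam n hbar x (max t t0)) atTop (nhds c0) :=
    tendsto_atTop_ciInf hfant hbb
  have hc0le : ∀ t : ℝ, c0 ≤ Lam n hbar x (max t t0) := fun t => ciInf_le hbb t
  -- constants
  have hM0 : 0 ≤ M := by
    refine le_trans ?_ (hM 0 ⟨0, hn⟩ ⟨0, hn⟩)
    refine intervalIntegral.integral_nonneg (htpmono.monotone (Nat.zero_le 1)) ?_
    intro t ht
    have ht0' : (0:ℝ) ≤ t := by rw [← htp0]; exact ht.1
    exact (habnd _ _ t ht0').1
  set mR : ℝ := n * abar * hbar + 2 * (n * M) with hmRdef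
  have hmR0 : 0 ≤ mR := by positivity
  set K : ℕ := ⌈(4:ℝ) * mR⌉₊ with hKdef
  have hmRK : mR ≤ (K:ℝ)/4 := by
    have := Nat.le_ceil ((4:ℝ) * mR)
    rw [← hKdef] at this
    linarith
  have hpowK : (0:ℝ) < 2^K := by positivity
  set ρ : ℝ := min (ε / 2^K) 1 / 2^K with hρdef
  have hρ0 : 0 < ρ := by
    apply div_pos _ hpowK
    exact lt_min (div_pos hε hpowK) one_pos
  have hρ1 : ρ ≤ 1 := by
    rw [hρdef, div_le_one hpowK]
    exact le_trans (min_le_right _ _) (by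
      have : (1:ℝ) ≤ 2^K := one_le_pow₀ (by norm_num)
      linarith)
  have hρ2K : ρ ≤ 1 / 2^K := by
    rw [hρdef]
    gcongr
    exact min_le_right _ _
  set θ : ℝ := ρ^n / 2^K with hθdef
  have hθ0 : 0 < θ := by positivity
  -- tp facts
  have htpnn : ∀ p : ℕ, (0:ℝ) ≤ tp p := by
    intro p
    rw [← htp0]
    exact htpmono.monotone (Nat.zero_le p)
  have hIg : ∀ (p : ℕ) (i : Fin n), (∫ r in tp p..tp (p+1), g i r) ≤ n * M := by
    intro p i
    have hle : tp p ≤ tp (p+1) := (htpmono (Nat.lt_succ_self p)).le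
    have he : (∫ r in tp p..tp (p+1), g i r) = ∑ j, ∫ r in tp p..tp (p+1), a i j r := by
      simp only [hgdef]
      exact intervalIntegral.integral_finset_sum (fun j _ => haII i j _ _ (htpnn p) hle)
    rw [he]
    calc (∑ j, ∫ r in tp p..tp (p+1), a i j r) ≤ ∑ _j : Fin n, M :=
          Finset.sum_le_sum (fun j _ => hM p i j)
    _ = n * M := by simp [Finset.sum_const, Finset.card_univ, mul_comm]
  -- mass over a clearance stretch
  have hmassb : ∀ (i : Fin n) (τ' : ℝ) (q1 : ℕ), t0 ≤ τ' → τ' ≤ tp q1 →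
      (∀ q', q' < q1 → tp q' < τ' + hbar) →
      (∫ r in τ'..tp (q1+1), g i r) ≤ mR := by
    intro i τ' q1 hτ't0 hτ'le hq1min
    have hτ'0 : (0:ℝ) ≤ τ' := ht0.trans hτ't0
    have hstep : tp q1 ≤ tp (q1+1) := (htpmono (Nat.lt_succ_self q1)).le
    have hsplit : (∫ r in τ'..tp (q1+1), g i r)
        = (∫ r in τ'..tp q1, g i r) + (∫ r in tp q1..tp (q1+1), g i r) :=
      (intervalIntegral.integral_add_adjacent_intervals
        (hgII i τ' (tp q1) hτ'0 hτ'le) (hgII i (tp q1) (tp (q1+1)) (htpnn q1) hstep)).symm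
    have hI2 : (∫ r in tp q1..tp (q1+1), g i r) ≤ n * M := hIg q1 i
    have hI1 : (∫ r in τ'..tp q1, g i r) ≤ n * abar * hbar + n * M := by
      have hnabar : (0:ℝ) ≤ (n:ℝ) * abar := by positivity
      cases q1 with
      | zero =>
        have he : τ' = tp 0 := le_antisymm (by rwa [htp0] at hτ'le ⊢) (by rw [htp0]; exact hτ'0)
        rw [he]
        simp only [intervalIntegral.integral_same]
        positivity
      | succ q =>
        have hq : tp q < τ' + hbar := hq1min q (Nat.lt_succ_self q)
        have hqstep : tp q ≤ tp (q+1) := (htpmono (Nat.lt_succ_self q)).le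
        rcases le_total (tp q) τ' with hc | hc
        · have h1 : (∫ r in τ'..tp (q+1), g i r) ≤ ∫ r in tp q..tp (q+1), g i r := by
            refine intervalIntegral.integral_mono_interval hc hτ'le le_rfl ?_
              (hgII i (tp q) (tp (q+1)) (htpnn q) hqstep)
            refine (ae_restrict_iff' measurableSet_Ioc).2 (Filter.Eventually.of_forall ?_)
            intro r hr
            exact hg0' i r (le_trans (htpnn q) hr.1.le)
          have h2 := hIg q i
          have h3 : (0:ℝ) ≤ n * abar * hbar := by positivity
          linarith
        · have h1 : (∫ r in τ'..tp (q+1), g i r)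
              = (∫ r in τ'..tp q, g i r) + (∫ r in tp q..tp (q+1), g i r) :=
            (intervalIntegral.integral_add_adjacent_intervals
              (hgII i τ' (tp q) hτ'0 hc) (hgII i (tp q) (tp (q+1)) (htpnn q) hqstep)).symm
          have h2 : (∫ r in τ'..tp q, g i r) ≤ (tp q - τ') * (n * abar) := by
            have h4 : (∫ r in τ'..tp q, g i r) ≤ ∫ _r in τ'..tp q, (n:ℝ) * abar := by
              refine intervalIntegral.integral_mono_on hc
                (hgII i τ' (tp q) hτ'0 hc) intervalIntegrable_const ?_
              intro r hr
              exact hgbd i r (hτ'0.trans hr.1)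
            have h5 : (∫ _r in τ'..tp q, (n:ℝ) * abar) = (tp q - τ') * (n * abar) := by
              rw [intervalIntegral.integral_const]; simp [smul_eq_mul]
            linarith
          have h3 : (tp q - τ') * (n * abar) ≤ n * abar * hbar := by
            have h6 : tp q - τ' ≤ hbar := by linarith
            nlinarith
          have h7 := hIg q i
          linarith
    rw [hsplit]
    rw [hmRdef]
    linarith
  -- PROPAGATION
  have propagate : ∀ s : ℝ, t0 ≤ s → ∀ (i0 : Fin n) (δ : ℝ), 0 < δ →
      x s i0 ≤ Lam n hbar x s - δ →
      ∃ T : ℝ, s ≤ T ∧ Lam n hbar x T ≤ Lam n hbar x s - θ * δ := by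
    intro s hs i0 δ hδ hxlow
    set Λ : ℝ := Lam n hbar x s with hΛdef
    have hwinΛ : ∀ (j : Fin n) (r : ℝ), s - hbar ≤ r → x r j ≤ Λ := fun j r hr =>
      hbound s hs j r hr
    -- one infection step
    have hstep : ∀ (S : Finset (Fin n)) (τ η : ℝ), s ≤ τ → 0 < η →
        (∀ j ∈ S, x τ j ≤ Λ - η) → S ≠ Finset.univ → S.Nonempty →
        ∃ (S' : Finset (Fin n)) (τ' : ℝ), S ⊆ S' ∧ S.card < S'.card ∧ s ≤ τ' ∧
          (∀ j ∈ S', x τ' j ≤ Λ - η * ρ) := by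
      intro S τ η hsτ hη hlow hSne hSnonempty
      have hτt0 : t0 ≤ τ := hs.trans hsτ
      have hex : ∃ q : ℕ, τ + hbar ≤ tp q := (htptop.eventually_ge_atTop (τ + hbar)).exists
      set q1 := Nat.find hex with hq1def
      have hq1 : τ + hbar ≤ tp q1 := Nat.find_spec hex
      have hq1min : ∀ q', q' < q1 → tp q' < τ + hbar := by
        intro q' hq'
        by_contra hcon
        push_neg at hcon
        exact absurd (Nat.find_le hcon) (not_le.2 hq')
      have hτtp : τ ≤ tp q1 := by linarith
      have hq1step : tp q1 ≤ tp (q1+1) := (htpmono (Nat.lt_succ_self q1)).le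
      have hmass1 : ∀ i : Fin n, (∫ r in τ..tp (q1+1), g i r) ≤ (K:ℝ)/4 := fun i =>
        le_trans (hmassb i τ q1 hτt0 hτtp hq1min) hmRK
      -- persistence of lowness for members of S
      have hpers : ∀ j ∈ S, ∀ t ∈ Icc τ (tp (q1+1)), x t j ≤ Λ - η / 2^K := by
        intro j hj t ht
        have hwinc : ∀ (j' : Fin n) (r : ℝ), r ∈ Icc (τ - hbar) t → x r j' ≤ Λ := by
          intro j' r hr
          exact hwinΛ j' r (by linarith [hr.1])
        have hmasst : (∫ r in τ..t, g j r) ≤ (K:ℝ)/4 := by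
          refine le_trans (le_trans ?_ (hmassb j τ q1 hτt0 hτtp hq1min)) hmRK
          refine intervalIntegral.integral_mono_interval le_rfl ht.1 ht.2 ?_
            (hgII j τ (tp (q1+1)) (ht0.trans hτt0) (hτtp.trans hq1step))
          refine (ae_restrict_iff' measurableSet_Ioc).2 (Filter.Eventually.of_forall ?_)
          intro r hr
          exact hg0' j r (le_trans (ht0.trans hτt0) hr.1.le)
        have hg1 := hgain j j Λ 0 le_rfl τ t K hτt0 ht.1 hwinc
          (fun r hr => by simpa using hwinc j r hr) hmasst
        have h1 : η ≤ Λ - x τ j := by linarith [hlow j hj]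
        have h2 : η / 2^K ≤ ((Λ - x τ j) + 0 * ∫ r in τ..t, a j j r) / 2^K := by
          gcongr
          linarith
        linarith [h2.trans hg1]
      -- an arc out of S
      obtain ⟨v0, hv0⟩ : ∃ v0 : Fin n, v0 ∉ S := by
        by_contra hcon
        push_neg at hcon
        exact hSne (Finset.eq_univ_iff_forall.2 hcon)
      obtain ⟨u0, hu0⟩ := hSnonempty
      obtain ⟨u, huS, jn, hjn, harc⟩ := rtg_cross _ S (hSC q1 u0 v0) hu0 hv0
      -- gain for the new node jn
      have htpt0 : t0 ≤ tp q1 := hτt0.trans hτtp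
      have hwinc' : ∀ (j' : Fin n) (r : ℝ), r ∈ Icc (tp q1 - hbar) (tp (q1+1)) → x r j' ≤ Λ := by
        intro j' r hr
        refine hwinΛ j' r ?_
        have : τ ≤ tp q1 - hbar := by linarith
        linarith [hr.1, hsτ]
      have hlowu : ∀ r ∈ Icc (tp q1 - hbar) (tp (q1+1)), x r u ≤ Λ - η / 2^K := by
        intro r hr
        refine hpers u huS r ⟨?_, hr.2⟩
        linarith [hr.1]
      have hmass2 : (∫ r in tp q1..tp (q1+1), g jn r) ≤ (K:ℝ)/4 := by
        refine le_trans (hIg q1 jn) (le_trans ?_ hmRK)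
        rw [hmRdef]
        have h1 : (0:ℝ) ≤ (n:ℝ)*abar*hbar := by positivity
        have h2 : (0:ℝ) ≤ (n:ℝ)*M := by positivity
        linarith
      have hg2 := hgain jn u Λ (η / 2^K) (by positivity) (tp q1) (tp (q1+1)) K htpt0
        hq1step hwinc' hlowu hmass2
      have hxtpjn : x (tp q1) jn ≤ Λ := hwinc' jn (tp q1) ⟨by linarith, hq1step⟩
      have hA : ε ≤ ∫ r in tp q1..tp (q1+1), a jn u r := harc
      have hnew : x (tp (q1+1)) jn ≤ Λ - η * ρ := by
        have h1 : (η / 2^K) * ε ≤ (η / 2^K) * ∫ r in tp q1..tp (q1+1), a jn u r := by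
          gcongr
        have h2 : ((Λ - x (tp q1) jn) + (η / 2^K) * ε) / 2^K
            ≤ ((Λ - x (tp q1) jn) + (η / 2^K) * ∫ r in tp q1..tp (q1+1), a jn u r) / 2^K := by
          gcongr
        have h3 : (η / 2^K) * ε / 2^K ≤ ((Λ - x (tp q1) jn) + (η / 2^K) * ε) / 2^K := by
          gcongr
          linarith
        have h4 := (h3.trans (h2.trans hg2))
        -- η ρ ≤ η ε / 2^(2K)
        have h5 : η * ρ ≤ (η / 2^K) * ε / 2^K := by
          have hm : ρ ≤ (ε / 2^K) / 2^K := by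
            rw [hρdef]
            gcongr
            exact min_le_left _ _
          calc η * ρ ≤ η * ((ε / 2^K) / 2^K) := mul_le_mul_of_nonneg_left hm hη.le
          _ = (η / 2^K) * ε / 2^K := by ring
        linarith
      refine ⟨insert jn S, tp (q1+1), Finset.subset_insert _ _, ?_, hsτ.trans (hτtp.trans hq1step), ?_⟩
      · rw [Finset.card_insert_of_notMem hjn]; omega
      · intro j hj
        rcases Finset.mem_insert.1 hj with rfl | hjS
        · exact hnew
        · have h6 := hpers j hjS (tp (q1+1)) ⟨hτtp.trans hq1step, le_rfl⟩
          have h7 : η * ρ ≤ η / 2^K := by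
            have := mul_le_mul_of_nonneg_left hρ2K hη.le
            calc η * ρ ≤ η * (1 / 2^K) := this
            _ = η / 2^K := by ring
          linarith
    -- grow the low set to everything
    have hgrow : ∀ (m : ℕ) (S : Finset (Fin n)) (τ η : ℝ), s ≤ τ → 0 < η →
        (∀ j ∈ S, x τ j ≤ Λ - η) → S.Nonempty → n ≤ S.card + m →
        ∃ τ' η', s ≤ τ' ∧ 0 < η' ∧ η * ρ ^ m ≤ η' ∧ ∀ j : Fin n, x τ' j ≤ Λ - η' := by
      intro m
      induction m with
      | zero =>
        intro S τ η hτ hη hlow hne hcard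
        have hSuniv : S = Finset.univ := by
          apply Finset.eq_univ_of_card
          have h1 : S.card ≤ n := by
            have := Finset.card_le_univ S
            simpa [Finset.card_univ] using this
          simp only [Fintype.card_fin]
          omega
        refine ⟨τ, η, hτ, hη, by simp, fun j => hlow j ?_⟩
        rw [hSuniv]; exact Finset.mem_univ j
      | succ m ih =>
        intro S τ η hτ hη hlow hne hcard
        by_cases hSu : S = Finset.univ
        · refine ⟨τ, η, hτ, hη, ?_, fun j => hlow j (by rw [hSu]; exact Finset.mem_univ j)⟩
          have h1 : ρ^(m+1) ≤ 1 := pow_le_one₀ hρ0.le hρ1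
          nlinarith
        · obtain ⟨S', τ', hsub, hcardlt, hτ', hlow'⟩ := hstep S τ η hτ hη hlow hSu hne
          obtain ⟨τ'', η'', h1, h2, h3, h4⟩ := ih S' τ' (η*ρ) hτ' (mul_pos hη hρ0) hlow'
            (hne.mono hsub) (by omega)
          refine ⟨τ'', η'', h1, h2, ?_, h4⟩
          calc η * ρ^(m+1) = (η*ρ)*ρ^m := by ring
          _ ≤ η'' := h3
    -- run the growth from {i0}
    have hstart : ∀ j ∈ ({i0} : Finset (Fin n)), x s j ≤ Λ - δ := by
      intro j hj
      rw [Finset.mem_singleton] at hj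
      subst hj
      exact hxlow
    obtain ⟨τf, ηf, hτf, hηf, hηflb, hlowf⟩ := hgrow (n-1) {i0} s δ le_rfl hδ hstart
      ⟨i0, Finset.mem_singleton_self i0⟩ (by simp [Finset.card_singleton]; omega)
    -- final persistence over one delay-window
    have hτft0 : t0 ≤ τf := hs.trans hτf
    have hfinal : ∀ (j : Fin n) (t' : ℝ), t' ∈ Icc τf (τf + hbar) → x t' j ≤ Λ - ηf / 2^K := by
      intro j t' ht'
      have hwinc : ∀ (j' : Fin n) (r : ℝ), r ∈ Icc (τf - hbar) t' → x r j' ≤ Λ := by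
        intro j' r hr
        exact hwinΛ j' r (by linarith [hr.1, hτf])
      have hmassf : (∫ r in τf..t', g j r) ≤ (K:ℝ)/4 := by
        have h1 : (∫ r in τf..t', g j r) ≤ ∫ _r in τf..t', (n:ℝ) * abar := by
          refine intervalIntegral.integral_mono_on ht'.1
            (hgII j τf t' (ht0.trans hτft0) ht'.1) intervalIntegrable_const ?_
          intro r hr
          exact hgbd j r (le_trans (ht0.trans hτft0) hr.1)
        have h2 : (∫ _r in τf..t', (n:ℝ) * abar) = (t' - τf) * (n * abar) := by
          rw [intervalIntegral.integral_const]; simp [smul_eq_mul]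
        have h3 : (t' - τf) * (n * abar) ≤ n * abar * hbar := by
          have h4 : t' - τf ≤ hbar := by linarith [ht'.2]
          have h5 : (0:ℝ) ≤ t' - τf := by linarith [ht'.1]
          have hna : (0:ℝ) ≤ (n:ℝ)*abar := by positivity
          nlinarith [hna]
        have h6 : (n:ℝ) * abar * hbar ≤ mR := by
          rw [hmRdef]
          have h7 : (0:ℝ) ≤ (n:ℝ)*M := by positivity
          linarith
        linarith [hmRK]
      have hg1 := hgain j j Λ 0 le_rfl τf t' K hτft0 ht'.1 hwinc
        (fun r hr => by simpa using hwinc j r hr) hmassf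
      have h1 : ηf ≤ Λ - x τf j := by linarith [hlowf j]
      have h2 : ηf / 2^K ≤ ((Λ - x τf j) + 0 * ∫ r in τf..t', a j j r) / 2^K := by
        gcongr
        linarith
      linarith [h2.trans hg1]
    -- conclude
    refine ⟨τf + hbar, by linarith [hτf], ?_⟩
    have hLamT : Lam n hbar x (τf + hbar) ≤ Λ - ηf / 2^K := by
      rw [show Lam n hbar x (τf + hbar)
          = ⨆ i : Fin n, sSup ((fun s => x s i) '' Icc (τf + hbar - hbar) (τf + hbar)) from rfl]
      refine ciSup_le (fun j => ?_)
      refine csSup_le ((nonempty_Icc.2 (by linarith)).image _) ?_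
      rintro y ⟨r, hr, rfl⟩
      exact hfinal j r ⟨by linarith [hr.1], hr.2⟩
    have hθδ : θ * δ ≤ ηf / 2^K := by
      have h6 : ρ^n ≤ ρ^(n-1) := pow_le_pow_of_le_one hρ0.le hρ1 (Nat.sub_le n 1)
      have h7 : δ * ρ^n ≤ δ * ρ^(n-1) := mul_le_mul_of_nonneg_left h6 hδ.le
      have h8 : δ * ρ^(n-1) ≤ ηf := by
        calc δ * ρ^(n-1) = δ * ρ^(n-1) := rfl
        _ ≤ ηf := hηflb
      have h9 : θ * δ = δ * ρ^n / 2^K := by rw [hθdef]; ring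
      rw [h9]
      calc δ * ρ^n / 2^K ≤ δ * ρ^(n-1) / 2^K := by gcongr
      _ ≤ ηf / 2^K := by gcongr
    linarith [hLamT]

  -- conclusion: every component tends to c0
  refine ⟨(c0 : EReal), EReal.coe_ne_top c0, fun i => ?_⟩
  rw [EReal.tendsto_coe]
  refine tendsto_order.2 ⟨?_, ?_⟩
  · -- lower bound: eventually b < x t i for b < c0
    intro b hb
    by_contra hcon
    rw [not_eventually] at hcon
    set δ : ℝ := c0 - b with hδdef
    have hδ0 : 0 < δ := by rw [hδdef]; linarith
    have hev : ∀ᶠ t in atTop, Lam n hbar x (max t t0) < c0 + θ*δ/2 := by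
      have : c0 < c0 + θ*δ/2 := by nlinarith [hθ0]
      exact htendsto.eventually_lt_const this
    obtain ⟨s, hsb, hsf, hst0⟩ :
        ∃ s : ℝ, ¬ b < x s i ∧ Lam n hbar x (max s t0) < c0 + θ*δ/2 ∧ t0 ≤ s := by
      obtain ⟨s, h1, h2, h3⟩ := (hcon.and_eventually (hev.and (eventually_ge_atTop t0))).exists
      exact ⟨s, h1, h2, h3⟩
    have hmax : max s t0 = s := max_eq_left hst0
    have hΛlt : Lam n hbar x s < c0 + θ*δ/2 := by rwa [hmax] at hsf
    have hc0Λ : c0 ≤ Lam n hbar x s := by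
      have := hc0le s
      rwa [hmax] at this
    have hxsb : x s i ≤ Lam n hbar x s - δ := by
      have h1 : x s i ≤ b := not_lt.1 hsb
      rw [hδdef]
      linarith
    obtain ⟨T, hsT, hT⟩ := propagate s hst0 i δ hδ0 hxsb
    have hc0T : c0 ≤ Lam n hbar x T := by
      have := hc0le T
      rwa [max_eq_left (hst0.trans hsT)] at this
    have hθδ : 0 < θ * δ := mul_pos hθ0 hδ0
    nlinarith [hθδ, hT, hΛlt, hc0T, hc0Λ]
  · -- upper bound: eventually x t i < b for c0 < b
    intro b hb
    have hev : ∀ᶠ t in atTop, Lam n hbar x (max t t0) < b := htendsto.eventually_lt_const hb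
    filter_upwards [hev, eventually_ge_atTop t0] with t h1 h2
    have h3 : x t i ≤ Lam n hbar x (max t t0) := by
      rw [max_eq_left h2]
      exact hwin t h2 i t ⟨by linarith, le_rfl⟩
    linarith
end

section
/- Suppose either (i) A(·) is non-instantaneously type-symmetric and the persistent graph G_∞ is connected, or (ii) A(·) is repeatedly strongly connected, and in both cases M := sup over i,j and p of ∫_{t_p}^{t_{p+1}} a_{ij}(t) dt is finite. Let x be a solution of the delayed consensus inequality on [t₀,∞) whose common limit c* = lim_{t→∞} x_i(t) is finite (the solution remains bounded). Then the nonnegative residual Δ_i(t) := Σ_{j=1}^n a_{ij}(t)(x_j(t−h_{ij}(t)) − x_i(t)) − ẋ_i(t) satisfies ∫_t^{t+T} Δ_i(ξ) dξ → 0 as t → ∞, for every horizon T > 0 and every i ∈ [1:n]. -/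
open MeasureTheory Set Filter intervalIntegral

theorem stmt7 (n : ℕ) (hn : 1 ≤ n) (abar hbar : ℝ) (habar : 0 ≤ abar) (hhbar : 0 ≤ hbar)
    (a h : Fin n → Fin n → ℝ → ℝ)
    (ha : GoodWeights n abar a) (hh : GoodDelays n hbar h)
    (hcon : (∃ tp K M, NonInstTypeSymm n a tp K ∧ PersGraphConnected n a ∧ MBound n a tp M)
          ∨ (∃ tp ε M, RepeatedlyStronglyConnected n a tp ε ∧ MBound n a tp M))
    (t0 : ℝ) (ht0 : 0 ≤ t0) (x D : ℝ → Fin n → ℝ)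
    (hx : IsSolIneq n a h hbar t0 x D)
    (c : ℝ) (hc : ∀ i : Fin n, Tendsto (fun t => x t i) atTop (nhds c)) :
    ∀ T : ℝ, 0 < T → ∀ i : Fin n,
      Tendsto (fun t => ∫ ξ in t..t + T,
          ((∑ j : Fin n, a i j ξ * (x (ξ - h i j ξ) j - x ξ i)) - D ξ i))
        atTop (nhds 0) := by

  classical
  obtain ⟨hxb, hDint, hrep, hae⟩ := hx
  obtain ⟨hameas, habd, hadiag⟩ := ha
  obtain ⟨hhmeas, hhbd, hhdiag⟩ := hh
  intro T hT i
  -- a measurable everywhere-defined version of x on [t0,∞)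
  set f : Fin n → ℝ → ℝ := fun j => (Ici t0).indicator (fun s => D s j) with hfdef
  have hfint : ∀ j, ∀ u v : ℝ, IntervalIntegrable (f j) volume u v := by
    intro j u v
    rw [intervalIntegrable_iff]
    rw [IntegrableOn, integrable_indicator_iff measurableSet_Ici]
    rw [IntegrableOn, Measure.restrict_restrict measurableSet_Ici]
    apply (hDint j (max u v)).mono_set
    intro s hs
    exact ⟨hs.1, hs.2.2⟩
  set X : Fin n → ℝ → ℝ := fun j t => x t0 j + ∫ s in t0..t, f j s with hXdef
  have hXcont : ∀ j, Continuous (X j) := fun j =>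
    continuous_const.add (intervalIntegral.continuous_primitive (hfint j) t0)
  have hXeq : ∀ j, ∀ t : ℝ, t0 ≤ t → X j t = x t j := by
    intro j t ht
    have hcong : ∫ s in t0..t, f j s = ∫ s in t0..t, D s j := by
      apply intervalIntegral.integral_congr
      intro s hs
      rw [uIcc_of_le ht] at hs
      exact Set.indicator_of_mem (mem_Ici.mpr hs.1) _
    rw [hXdef]; simp only []
    rw [hcong, ← hrep j t ht]
  -- ε-δ argument
  rw [Metric.tendsto_atTop]
  intro ε hε
  set ε' : ℝ := ε / (2 * n * abar * T + 3) with hε'def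
  have hden : (0:ℝ) < 2 * n * abar * T + 3 := by positivity
  have hε' : 0 < ε' := div_pos hε hden
  have hball : ∀ᶠ (y : ℝ) in nhds c, |y - c| < ε' := by
    filter_upwards [Metric.ball_mem_nhds c hε'] with y hy
    simpa [Real.dist_eq] using hy
  have hevent : ∀ᶠ t in atTop, ∀ j : Fin n, |x t j - c| < ε' :=
    eventually_all.mpr fun j => (hc j).eventually hball
  obtain ⟨N, hN⟩ := eventually_atTop.mp hevent
  refine ⟨max (N + hbar) (t0 + hbar), fun t ht => ?_⟩
  have htN : N + hbar ≤ t := le_trans (le_max_left _ _) ht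
  have htt0 : t0 + hbar ≤ t := le_trans (le_max_right _ _) ht
  have ht0t : t0 ≤ t := by linarith
  have htnn : 0 ≤ t := le_trans ht0 ht0t
  have htT : t ≤ t + T := by linarith
  -- basic facts about points in the interval
  have hpt : ∀ ξ ∈ Icc t (t + T), ∀ j : Fin n,
      (t0 ≤ ξ - h i j ξ ∧ N ≤ ξ - h i j ξ) ∧ t0 ≤ ξ ∧ N ≤ ξ := by
    intro ξ hξ j
    have hξnn : 0 ≤ ξ := le_trans htnn hξ.1
    obtain ⟨hh0, hh1⟩ := hhbd i j ξ hξnn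
    refine ⟨⟨by linarith [hξ.1], by linarith [hξ.1]⟩, by linarith [hξ.1], by linarith [hξ.1]⟩
  set S : ℝ → ℝ := fun ξ => ∑ j : Fin n, a i j ξ * (x (ξ - h i j ξ) j - x ξ i) with hSdef
  -- pointwise bound on S
  have hSbd : ∀ ξ ∈ Icc t (t + T), |S ξ| ≤ 2 * n * abar * ε' := by
    intro ξ hξ
    have hξnn : 0 ≤ ξ := le_trans htnn hξ.1
    calc |S ξ| ≤ ∑ j : Fin n, |a i j ξ * (x (ξ - h i j ξ) j - x ξ i)| :=
          Finset.abs_sum_le_sum_abs _ _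
      _ ≤ ∑ _j : Fin n, abar * (2 * ε') := by
          apply Finset.sum_le_sum
          intro j _
          rw [abs_mul]
          have ha1 := habd i j ξ hξnn
          have hd : |x (ξ - h i j ξ) j - x ξ i| ≤ 2 * ε' := by
            obtain ⟨⟨_, hNd⟩, _, hNξ⟩ := hpt ξ hξ j
            have h1 := hN _ hNd j
            have h2 := hN _ hNξ i
            have : x (ξ - h i j ξ) j - x ξ i =
                (x (ξ - h i j ξ) j - c) - (x ξ i - c) := by ring
            rw [this]
            calc |(x (ξ - h i j ξ) j - c) - (x ξ i - c)| ≤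
                |x (ξ - h i j ξ) j - c| + |x ξ i - c| := abs_sub _ _
              _ ≤ 2 * ε' := by linarith [le_of_lt h1, le_of_lt h2]
          have habs : |a i j ξ| = a i j ξ := abs_of_nonneg ha1.1
          rw [habs]
          exact mul_le_mul ha1.2 hd (abs_nonneg _) habar
      _ = n * (abar * (2 * ε')) := by simp [Finset.sum_const, mul_comm]
      _ = 2 * n * abar * ε' := by ring
  -- integrability of S on [t, t+T]
  have hSmeas : Measurable fun ξ => ∑ j : Fin n, a i j ξ *
      (X j (ξ - h i j ξ) - X i ξ) := by
    apply Finset.measurable_sum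
    intro j _
    exact (hameas i j).mul
      (((hXcont j).measurable.comp (measurable_id.sub (hhmeas i j))).sub
        (hXcont i).measurable)
  have hSeq : ∀ ξ ∈ Icc t (t + T),
      (∑ j : Fin n, a i j ξ * (X j (ξ - h i j ξ) - X i ξ)) = S ξ := by
    intro ξ hξ
    apply Finset.sum_congr rfl
    intro j _
    obtain ⟨⟨hd0, _⟩, hξ0, _⟩ := hpt ξ hξ j
    rw [hXeq j _ hd0, hXeq i _ hξ0]
  have hSint : IntervalIntegrable S volume t (t + T) := by
    rw [intervalIntegrable_iff_integrableOn_Icc_of_le htT]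
    refine ⟨(hSmeas.aestronglyMeasurable.restrict).congr ?_,
      HasFiniteIntegral.restrict_of_bounded (C := 2 * n * abar * ε')
        measure_Icc_lt_top ?_⟩
    · rw [Filter.EventuallyEq, ae_restrict_iff' measurableSet_Icc]
      exact ae_of_all _ fun ξ hξ => hSeq ξ hξ
    · rw [ae_restrict_iff' measurableSet_Icc]
      exact ae_of_all _ fun ξ hξ => by
        simpa [Real.norm_eq_abs] using hSbd ξ hξ
  -- integrability of D on the relevant intervals
  have hDi : ∀ u v : ℝ, t0 ≤ u → u ≤ v →
      IntervalIntegrable (fun s => D s i) volume u v := by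
    intro u v hu huv
    rw [intervalIntegrable_iff_integrableOn_Icc_of_le huv]
    exact (hDint i v).mono_set (Icc_subset_Icc hu le_rfl)
  have hD1 : IntervalIntegrable (fun s => D s i) volume t (t + T) := hDi t (t + T) ht0t htT
  -- ∫ D over [t,t+T] equals the increment of x i
  have hDval : (∫ s in t..t + T, D s i) = x (t + T) i - x t i := by
    have h1 := hrep i t ht0t
    have h2 := hrep i (t + T) (by linarith)
    have h3 := intervalIntegral.integral_interval_sub_left
      (hDi t0 (t + T) le_rfl (by linarith)) (hDi t0 t le_rfl ht0t)
    rw [h1, h2]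
    rw [← h3]; ring
  -- split the integral
  have hsplit : (∫ ξ in t..t + T, (S ξ - D ξ i)) =
      (∫ ξ in t..t + T, S ξ) - ∫ ξ in t..t + T, D ξ i :=
    intervalIntegral.integral_sub hSint hD1
  have hSintbd : |∫ ξ in t..t + T, S ξ| ≤ 2 * n * abar * ε' * T := by
    have := intervalIntegral.norm_integral_le_of_norm_le_const
      (C := 2 * n * abar * ε') (f := S) (a := t) (b := t + T) (fun ξ hξ => by
        have hξ' : ξ ∈ Icc t (t + T) :=
          mem_Icc_of_Ioc (by rwa [uIoc_of_le htT] at hξ)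
        simpa [Real.norm_eq_abs] using hSbd ξ hξ')
    simpa [Real.norm_eq_abs, abs_of_pos hT] using this
  have hxbd : |x (t + T) i - x t i| ≤ 2 * ε' := by
    have h1 := hN (t + T) (by linarith) i
    have h2 := hN t (by linarith) i
    have : x (t + T) i - x t i = (x (t + T) i - c) - (x t i - c) := by ring
    rw [this]
    calc |(x (t + T) i - c) - (x t i - c)| ≤ |x (t + T) i - c| + |x t i - c| := abs_sub _ _
      _ ≤ 2 * ε' := by linarith [le_of_lt h1, le_of_lt h2]
  rw [Real.dist_eq, sub_zero]
  have : (∫ ξ in t..t + T,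
      ((∑ j : Fin n, a i j ξ * (x (ξ - h i j ξ) j - x ξ i)) - D ξ i)) =
      (∫ ξ in t..t + T, S ξ) - ∫ ξ in t..t + T, D ξ i := hsplit
  rw [this, hDval]
  calc |(∫ ξ in t..t + T, S ξ) - (x (t + T) i - x t i)| ≤
      |∫ ξ in t..t + T, S ξ| + |x (t + T) i - x t i| := abs_sub _ _
    _ ≤ 2 * n * abar * ε' * T + 2 * ε' := by linarith
    _ = ε' * (2 * n * abar * T + 2) := by ring
    _ < ε' * (2 * n * abar * T + 3) := by
        apply mul_lt_mul_of_pos_left _ hε'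
        linarith
    _ = ε := by
        rw [hε'def, div_mul_cancel₀]
        exact ne_of_gt hden
end

section
/- Let x be a solution of the delayed consensus inequality on [t₀,∞) such that Λ* := lim_{t→∞} Λ(t) is finite, where Λ(t) = max_{i∈[1:n]} sup_{s∈[t−h̄,t]} x_i(s). Then the largest component converges to Λ*: max_{i∈[1:n]} x_i(t) → Λ* as t → ∞. -/
open MeasureTheory Set Filter intervalIntegral

theorem stmt10 (n : ℕ) (hn : 1 ≤ n) (abar hbar : ℝ) (habar : 0 ≤ abar) (hhbar : 0 ≤ hbar)
    (a h : Fin n → Fin n → ℝ → ℝ)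
    (ha : GoodWeights n abar a) (hh : GoodDelays n hbar h)
    (t0 : ℝ) (ht0 : 0 ≤ t0) (x D : ℝ → Fin n → ℝ)
    (hx : IsSolIneq n a h hbar t0 x D)
    (L : ℝ) (hL : Tendsto (Lam n hbar x) atTop (nhds L)) :
    Tendsto (fun t => ⨆ i : Fin n, x t i) atTop (nhds L) := by
  classical
  obtain ⟨hLB, hInt, hRep, hIneq⟩ := hx
  haveI : Nonempty (Fin n) := Fin.pos_iff_nonempty.mp hn
  set c : ℝ := n * abar + 1 with hc_def
  have hc : 0 < c := by positivity
  set T0 : ℝ := (2 * c)⁻¹ with hT0_def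
  have hT0 : 0 < T0 := by positivity
  -- interval integrability of D on subintervals of [t0, ∞)
  have hII : ∀ (i : Fin n) (α β : ℝ), t0 ≤ α → t0 ≤ β →
      IntervalIntegrable (fun σ => D σ i) volume α β := by
    intro i α β hα hβ
    apply IntegrableOn.intervalIntegrable
    apply (hInt i (max α β)).mono_set
    intro σ hσ
    rw [Set.mem_uIcc] at hσ
    constructor
    · rcases hσ with h1 | h1 <;> linarith [h1.1]
    · rcases hσ with h1 | h1
      · exact h1.2.trans (le_max_right _ _)
      · exact h1.2.trans (le_max_left _ _)
  -- the difference formula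
  have hdiff : ∀ (i : Fin n) (α β : ℝ), t0 ≤ α → α ≤ β →
      x β i = x α i + ∫ σ in α..β, D σ i := by
    intro i α β hα hαβ
    have h1 := hRep i α hα
    have h2 := hRep i β (hα.trans hαβ)
    have h3 := intervalIntegral.integral_add_adjacent_intervals
      (hII i t0 α le_rfl hα) (hII i α β hα (hα.trans hαβ))
    rw [h2, h1, ← h3]; ring
  -- continuity of x on [t0, S]
  have hcont : ∀ (i : Fin n) (S : ℝ), ContinuousOn (fun s => x s i) (Icc t0 S) := by
    intro i S
    have h1 : ContinuousOn (fun s => x t0 i + ∫ σ in Ioc t0 s, D σ i) (Icc t0 S) :=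
      continuousOn_const.add (intervalIntegral.continuousOn_primitive (hInt i S))
    apply ContinuousOn.congr h1
    intro s hs
    show x s i = x t0 i + ∫ σ in Ioc t0 s, D σ i
    rw [hRep i s hs.1, intervalIntegral.integral_of_le hs.1]
  -- basic Lam inequalities
  have lam_ub : ∀ t, t0 ≤ t → ∀ (i : Fin n) (s : ℝ), t - hbar ≤ s → s ≤ t →
      x s i ≤ Lam n hbar x t := by
    intro t ht i s h1 h2
    obtain ⟨C, hC⟩ := hLB t
    have hbdd : ∀ j : Fin n, BddAbove ((fun σ => x σ j) '' Icc (t - hbar) t) := by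
      intro j
      refine ⟨C, ?_⟩
      rintro y ⟨σ, hσ, rfl⟩
      exact (abs_le.mp (hC j σ ⟨by linarith [hσ.1], hσ.2⟩)).2
    have h3 : x s i ≤ sSup ((fun σ => x σ i) '' Icc (t - hbar) t) :=
      le_csSup (hbdd i) ⟨s, ⟨h1, h2⟩, rfl⟩
    refine h3.trans ?_
    exact le_ciSup (f := fun j : Fin n => sSup ((fun σ => x σ j) '' Icc (t - hbar) t))
      (Set.Finite.bddAbove (Set.finite_range _)) i
  have lam_le : ∀ t z, (∀ (i : Fin n) (s : ℝ), t - hbar ≤ s → s ≤ t → x s i ≤ z) →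
      Lam n hbar x t ≤ z := by
    intro t z hz
    unfold Lam
    apply ciSup_le
    intro i
    refine csSup_le ⟨x t i, ⟨t, ⟨by linarith, le_rfl⟩, rfl⟩⟩ ?_
    rintro y ⟨σ, hσ, rfl⟩
    exact hz i σ hσ.1 hσ.2
  -- The key time-stepping lemma
  have step : ∀ (t1 S P β : ℝ), t0 ≤ t1 →
      (∀ (j : Fin n) (σ : ℝ), t1 - hbar ≤ σ → σ ≤ S → x σ j ≤ P) →
      β ≤ P → (∀ i : Fin n, x t1 i ≤ β) →
      ∀ k : ℕ, ∀ s : ℝ, t1 ≤ s → s ≤ S → s ≤ t1 + k * T0 →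
      ∀ i : Fin n, x s i ≤ P - (P - β) / 2 ^ k := by
    intro t1 S P β ht1 hbnd hβP hinit k
    induction k with
    | zero =>
      intro s hs1 hsS hsk i
      have hseq : s = t1 := le_antisymm (by simpa using hsk) hs1
      subst hseq
      rw [pow_zero, div_one]
      have := hinit i
      linarith
    | succ k ih =>
      intro s hs1 hsS hsk i
      have he0 : 0 ≤ (P - β) / 2 ^ k := div_nonneg (by linarith) (by positivity)
      have hsplit : (P - β) / 2 ^ (k + 1) = ((P - β) / 2 ^ k) / 2 := by
        rw [pow_succ, ← div_div]
      rcases le_or_gt s (t1 + k * T0) with hs' | hs'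
      · have h1 := ih s hs1 hsS hs' i
        rw [hsplit]; linarith
      · have hkT0 : 0 ≤ (k : ℝ) * T0 := by positivity
        have hm1 : t1 ≤ t1 + k * T0 := by linarith
        have hmS : t1 + k * T0 ≤ S := hs'.le.trans hsS
        set e : ℝ := (P - β) / 2 ^ k with he_def
        set K : Set ℝ := Icc t1 s ∩ (fun σ => x σ i) ⁻¹' Iic (P - e) with hK_def
        have hmem : t1 + k * T0 ∈ K := ⟨⟨hm1, hs'.le⟩, ih _ hm1 hmS le_rfl i⟩
        have hKcl : IsClosed K := by
          have hcont' : ContinuousOn (fun σ => x σ i) (Icc t1 s) :=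
            (hcont i s).mono (Icc_subset_Icc_left ht1)
          exact ContinuousOn.preimage_isClosed_of_isClosed hcont' isClosed_Icc isClosed_Iic
        have hKcp : IsCompact K :=
          IsCompact.of_isClosed_subset isCompact_Icc hKcl Set.inter_subset_left
        have hτmem : sSup K ∈ K := hKcp.sSup_mem ⟨_, hmem⟩
        set τ : ℝ := sSup K with hτ_def
        have hτ1 : t1 ≤ τ := hτmem.1.1
        have hτs : τ ≤ s := hτmem.1.2
        have hτx : x τ i ≤ P - e := hτmem.2
        have hτm : t1 + k * T0 ≤ τ := le_csSup hKcp.bddAbove hmem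
        have hgap : s - τ ≤ T0 := by
          push_cast at hsk
          linarith
        have habove : ∀ σ, τ < σ → σ ≤ s → P - e < x σ i := by
          intro σ h1 h2
          by_contra hle
          push_neg at hle
          have hσK : σ ∈ K := ⟨⟨hτ1.trans h1.le, h2⟩, hle⟩
          exact absurd (le_csSup hKcp.bddAbove hσK) (not_le.mpr h1)
        have ht0τ : t0 ≤ τ := ht1.trans hτ1
        have hxeq := hdiff i τ s ht0τ hτs
        have hIbound : (∫ σ in τ..s, D σ i) ≤ ∫ _σ in τ..s, c * e := by
          apply intervalIntegral.integral_mono_ae_restrict hτs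
            (hII i τ s ht0τ (ht0τ.trans hτs)) intervalIntegrable_const
          have hne : ∀ᵐ σ : ℝ ∂volume, σ ≠ τ := by
            rw [ae_iff]
            have hset : {σ : ℝ | ¬σ ≠ τ} = {τ} := by ext σ; simp
            rw [hset]
            exact measure_singleton τ
          filter_upwards [ae_restrict_mem measurableSet_Icc, ae_restrict_of_ae hIneq,
            ae_restrict_of_ae hne] with σ hσI hσD hσne
          have hτσ : τ < σ := lt_of_le_of_ne hσI.1 (Ne.symm hσne)
          have ht0σ : t0 ≤ σ := ht0τ.trans hσI.1
          have h0σ : (0 : ℝ) ≤ σ := ht0.trans ht0σ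
          have hxσ : P - e < x σ i := habove σ hτσ hσI.2
          refine (hσD ht0σ i).trans ?_
          have hterm : ∀ j : Fin n, a i j σ * (x (σ - h i j σ) j - x σ i) ≤ abar * e := by
            intro j
            obtain ⟨ha0, haB⟩ := ha.2.1 i j σ h0σ
            obtain ⟨hh0, hhB⟩ := hh.2.1 i j σ h0σ
            have hxh : x (σ - h i j σ) j ≤ P :=
              hbnd j _ (by linarith [hσI.1]) (by linarith [hσI.2, hsS])
            have h1 : x (σ - h i j σ) j - x σ i ≤ e := by linarith
            calc a i j σ * (x (σ - h i j σ) j - x σ i) ≤ a i j σ * e :=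
                  mul_le_mul_of_nonneg_left h1 ha0
              _ ≤ abar * e := mul_le_mul_of_nonneg_right haB he0
          calc (∑ j : Fin n, a i j σ * (x (σ - h i j σ) j - x σ i))
              ≤ ∑ _j : Fin n, abar * e := Finset.sum_le_sum fun j _ => hterm j
            _ = n * (abar * e) := by
                rw [Finset.sum_const, Finset.card_univ, Fintype.card_fin, nsmul_eq_mul]
            _ ≤ c * e := by rw [hc_def]; nlinarith [he0]
        have hconst : (∫ _σ in τ..s, c * e) = (s - τ) * (c * e) := by
          rw [intervalIntegral.integral_const, smul_eq_mul]
        have hmul1 : (s - τ) * (c * e) ≤ T0 * (c * e) :=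
          mul_le_mul_of_nonneg_right hgap (by positivity)
        have hmul2 : T0 * (c * e) = e / 2 := by
          rw [hT0_def]
          field_simp
        rw [hsplit]
        rw [hconst] at hIbound
        have h6 : (∫ σ in τ..s, D σ i) ≤ e / 2 := hIbound.trans (hmul1.trans_eq hmul2)
        have h7 : x τ i + (∫ σ in τ..s, D σ i) ≤ (P - e) + e / 2 := add_le_add hτx h6
        have h8 : (P - e) + e / 2 = P - e / 2 := by ring
        rw [hxeq]
        linarith
  -- invariance: for t1 ≥ t0, all future values stay below Lam t1
  have invA : ∀ t1, t0 ≤ t1 → ∀ s, t1 ≤ s → ∀ i : Fin n, x s i ≤ Lam n hbar x t1 := by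
    intro t1 ht1 s hs i
    set M : ℝ := Lam n hbar x t1 with hM_def
    set V : Set ℝ := {y | ∃ j : Fin n, ∃ σ ∈ Icc (t1 - hbar) s, x σ j = y} with hV_def
    obtain ⟨C, hC⟩ := hLB s
    have hVbdd : BddAbove V := by
      refine ⟨C, ?_⟩
      rintro y ⟨j, σ, hσ, rfl⟩
      exact (abs_le.mp (hC j σ ⟨by linarith [hσ.1], hσ.2⟩)).2
    have hVne : V.Nonempty := ⟨x s i, i, s, ⟨by linarith, le_rfl⟩, rfl⟩
    have hmemV : x s i ∈ V := ⟨i, s, ⟨by linarith, le_rfl⟩, rfl⟩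
    by_cases hQM : sSup V ≤ M
    · exact (le_csSup hVbdd hmemV).trans hQM
    · exfalso
      push_neg at hQM
      set P : ℝ := sSup V with hP_def
      have hd : 0 < P - M := by linarith
      have hhist : ∀ (j : Fin n) (σ : ℝ), t1 - hbar ≤ σ → σ ≤ t1 → x σ j ≤ M :=
        fun j σ h1 h2 => lam_ub t1 ht1 j σ h1 h2
      have hinit : ∀ j : Fin n, x t1 j ≤ M := fun j => hhist j t1 (by linarith) le_rfl
      have hbnd : ∀ (j : Fin n) (σ : ℝ), t1 - hbar ≤ σ → σ ≤ s → x σ j ≤ P :=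
        fun j σ h1 h2 => le_csSup hVbdd ⟨j, σ, ⟨h1, h2⟩, rfl⟩
      obtain ⟨k, hk⟩ := exists_nat_ge ((s - t1) / T0)
      have hsk : s ≤ t1 + k * T0 := by
        rw [div_le_iff₀ hT0] at hk
        linarith
      have hall : ∀ y ∈ V, y ≤ P - (P - M) / 2 ^ k := by
        rintro y ⟨j, σ, hσ, rfl⟩
        rcases le_or_gt σ t1 with hσ1 | hσ1
        · have h1 : x σ j ≤ M := hhist j σ hσ.1 hσ1
          have h2 : (P - M) / 2 ^ k ≤ P - M := by
            apply div_le_self hd.le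
            exact one_le_pow₀ (by norm_num)
          linarith
        · exact step t1 s P M ht1 hbnd hQM.le hinit k σ hσ1.le hσ.2
            (hσ.2.trans hsk) j
      have hfin : P ≤ P - (P - M) / 2 ^ k := csSup_le hVne hall
      have hpos : 0 < (P - M) / 2 ^ k := div_pos hd (by positivity)
      linarith
  -- Lam is non-increasing
  have lamMono : ∀ t t', t0 ≤ t → t ≤ t' → Lam n hbar x t' ≤ Lam n hbar x t := by
    intro t t' ht htt'
    apply lam_le t'
    intro i σ h1 h2
    rcases le_or_gt σ t with hσ | hσ
    · exact lam_ub t ht i σ (by linarith) hσ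
    · exact invA t ht σ hσ.le i
  -- L is a lower bound for Lam
  have hLlb : ∀ t, t0 ≤ t → L ≤ Lam n hbar x t := by
    intro t ht
    apply le_of_tendsto hL
    filter_upwards [eventually_ge_atTop t] with t' ht'
    exact lamMono t t' ht ht'
  -- fix k* with hbar ≤ k* * T0
  obtain ⟨ks, hks⟩ := exists_nat_ge (hbar / T0)
  have hksT : hbar ≤ ks * T0 := by
    rw [div_le_iff₀ hT0] at hks
    linarith
  -- the max itself
  have hsup_le : ∀ t, t0 ≤ t → (⨆ i : Fin n, x t i) ≤ Lam n hbar x t := by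
    intro t ht
    apply ciSup_le
    intro i
    exact lam_ub t ht i t (by linarith) le_rfl
  have hle_sup : ∀ (t : ℝ) (i : Fin n), x t i ≤ ⨆ j : Fin n, x t j := by
    intro t i
    exact le_ciSup (Set.Finite.bddAbove (Set.finite_range _)) i
  rw [Metric.tendsto_atTop]
  intro δ hδ
  set δ' : ℝ := δ / 2 / 2 ^ ks with hδ'_def
  have hδ'pos : 0 < δ' := by positivity
  obtain ⟨N1, hN1⟩ := Metric.tendsto_atTop.mp hL (δ' / 2) (by positivity)
  refine ⟨max N1 t0, ?_⟩
  intro t htN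
  have htN1 : N1 ≤ t := (le_max_left _ _).trans htN
  have htt0 : t0 ≤ t := (le_max_right _ _).trans htN
  have hLamt : |Lam n hbar x t - L| < δ' / 2 := by
    have := hN1 t htN1
    rwa [Real.dist_eq] at this
  have hLamt_ub : Lam n hbar x t < L + δ' / 2 := by
    have := abs_lt.mp hLamt
    linarith [this.2]
  have hLamt_lb : L ≤ Lam n hbar x t := hLlb t htt0
  -- lower bound on the sup
  have hlow : L - δ < ⨆ i : Fin n, x t i := by
    by_contra hcon
    push_neg at hcon
    set M : ℝ := Lam n hbar x t with hM_def
    have hinit : ∀ i : Fin n, x t i ≤ M - δ := by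
      intro i
      have h1 : x t i ≤ L - δ := (hle_sup t i).trans hcon
      linarith
    have hbnd : ∀ (j : Fin n) (σ : ℝ), t - hbar ≤ σ → σ ≤ t + hbar → x σ j ≤ M := by
      intro j σ h1 h2
      rcases le_or_gt σ t with hσ | hσ
      · exact lam_ub t htt0 j σ h1 hσ
      · exact invA t htt0 σ hσ.le j
    have hβM : M - δ ≤ M := by linarith
    have hstep := step t (t + hbar) M (M - δ) htt0 hbnd hβM hinit ks
    have hLam2 : Lam n hbar x (t + hbar) ≤ M - δ / 2 ^ ks := by
      apply lam_le (t + hbar)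
      intro i σ h1 h2
      have h1' : t ≤ σ := by linarith
      have := hstep σ h1' h2 (by linarith) i
      have heq : M - (M - (M - δ)) / 2 ^ ks = M - δ / 2 ^ ks := by ring_nf
      linarith [heq ▸ this]
    have hL2 : L ≤ Lam n hbar x (t + hbar) := hLlb (t + hbar) (by linarith)
    have hδks : δ / 2 ^ ks = 2 * δ' := by
      rw [hδ'_def]
      ring
    rw [hδks] at hLam2
    linarith
  have hup : (⨆ i : Fin n, x t i) ≤ Lam n hbar x t := hsup_le t htt0
  rw [Real.dist_eq, abs_lt]
  constructor
  · linarith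
  · have : (⨆ i : Fin n, x t i) < L + δ' / 2 := lt_of_le_of_lt hup hLamt_ub
    have hδ'δ : δ' / 2 < δ := by
      have h1 : (1:ℝ) ≤ 2 ^ ks := one_le_pow₀ (by norm_num)
      have h2 : δ' ≤ δ / 2 := by
        rw [hδ'_def]
        exact div_le_self (by positivity) h1
      linarith
    linarith
end
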